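/- arXiv:1309.2340 — 5 statements merged into one kernel-verified Lean document; each statement's English description precedes it below -/
import Mathlib

section
/- If A is a bi-connected set of vertices in ℤ^d, then each of the three sets ∂_in A ∪ ∂_out A, A^{++} \ A, and A \ A^{--} is a connected set of vertices of ℤ^d. -/
namespace P3C

def latticeGraph (d : ℕ) : SimpleGraph (Fin d → ℤ) where
  Adj v w := ∃ i, (w i = v i + 1 ∨ w i = v i - 1) ∧ ∀ j, j ≠ i → w j = v j
  symm := by
    constructor
    rintro v w ⟨i, h1, h2⟩
    exact ⟨i, by omega, fun j hj => (h2 j hj).symm⟩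
  loopless := by
    constructor
    rintro v ⟨i, h1, _⟩
    omega

def vplus (d : ℕ) (U : Set (Fin d → ℤ)) : Set (Fin d → ℤ) :=
  {u | u ∈ U ∨ ∃ w ∈ U, (latticeGraph d).Adj u w}

def vminus (d : ℕ) (U : Set (Fin d → ℤ)) : Set (Fin d → ℤ) :=
  {u | u ∈ U ∧ ∀ w, (latticeGraph d).Adj u w → w ∈ U}

def inBdry (d : ℕ) (U : Set (Fin d → ℤ)) : Set (Fin d → ℤ) := U \ vminus d U

def outBdry (d : ℕ) (U : Set (Fin d → ℤ)) : Set (Fin d → ℤ) := vplus d U \ U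

def ConnectedIn {V : Type*} (G : SimpleGraph V) (S : Set V) : Prop := (G.induce S).Connected

def BiConnected (d : ℕ) (U : Set (Fin d → ℤ)) : Prop :=
  U ≠ ∅ ∧ U ≠ Set.univ ∧ ConnectedIn (latticeGraph d) U ∧ ConnectedIn (latticeGraph d) Uᶜ

def edgeBdry (d : ℕ) (U : Set (Fin d → ℤ)) : Set ((Fin d → ℤ) × (Fin d → ℤ)) :=
  {p | (latticeGraph d).Adj p.1 p.2 ∧ ((p.1 ∈ U ∧ p.2 ∉ U) ∨ (p.2 ∈ U ∧ p.1 ∉ U))}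

def IsFourCycle (d : ℕ) (v00 v01 v11 v10 : Fin d → ℤ) : Prop :=
  (latticeGraph d).Adj v00 v01 ∧ (latticeGraph d).Adj v01 v11 ∧
  (latticeGraph d).Adj v11 v10 ∧ (latticeGraph d).Adj v10 v00 ∧ v00 ≠ v11 ∧ v01 ≠ v10

def BoundaryDisjoint (d : ℕ) (U1 U2 : Set (Fin d → ℤ)) : Prop :=
  edgeBdry d U1 ∩ edgeBdry d U2 = ∅ ∧
  ¬ ∃ v00 v01 v11 v10, IsFourCycle d v00 v01 v11 v10 ∧
    v00 ∈ U1ᶜ ∩ U2ᶜ ∧ v01 ∈ U1ᶜ ∩ U2 ∧ v11 ∈ U1 ∩ U2 ∧ v10 ∈ U1 ∩ U2ᶜ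

def translates (n d : ℕ) (U : Set (Fin d → ℤ)) : Set (Set (Fin d → ℤ)) :=
  {W | ∃ x : Fin d → ℤ, (∀ i, (n : ℤ) ∣ x i) ∧ W = (fun u => u + x) '' U}

def TranslationRespecting (n d : ℕ) (U : Set (Fin d → ℤ)) : Prop :=
  BiConnected d U ∧
  ∀ U1 ∈ translates n d U, ∀ U2 ∈ translates n d U, U1 ≠ U2 → BoundaryDisjoint d U1 U2

def TypeZero (n d : ℕ) (U : Set (Fin d → ℤ)) : Prop :=
  TranslationRespecting n d U ∧ (translates n d U).Nontrivial ∧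
  ∀ A ∈ translates n d U, ∀ B ∈ translates n d U, A ⊆ B ∨ B ⊆ A

noncomputable def setDist (d : ℕ) (A B : Set (Fin d → ℤ)) : ℕ :=
  sInf {k | ∃ a ∈ A, ∃ b ∈ B, (latticeGraph d).dist a b = k}

def IsLatticeHHF (d : ℕ) (h : (Fin d → ℤ) → ℤ) : Prop :=
  ∀ v w, (latticeGraph d).Adj v w → |h v - h w| = 1

def homZeroLattice (d : ℕ) : Set ((Fin d → ℤ) → ℤ) :=
  {h | IsLatticeHHF d h ∧ h 0 = 0}

def IsQP (n d : ℕ) (m : Fin d → ℤ) (h : (Fin d → ℤ) → ℤ) : Prop :=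
  h ∈ homZeroLattice d ∧ ∀ (v : Fin d → ℤ) (i : Fin d), h (v + Pi.single i (n : ℤ)) = h v + m i

def QPset (n d : ℕ) : Set ((Fin d → ℤ) → ℤ) :=
  {h | ∃ m : Fin d → ℤ, (∀ i, (6 : ℤ) ∣ m i ∧ |m i| ≤ (n : ℤ)) ∧ IsQP n d m h}

def compIn {V : Type*} (G : SimpleGraph V) (S : Set V) (u : V) : Set V :=
  {w | ∃ (hu : u ∈ S) (hw : w ∈ S), (G.induce S).Reachable ⟨u, hu⟩ ⟨w, hw⟩}

def subLL (d : ℕ) (h : (Fin d → ℤ) → ℤ) (k : ℤ) (u : Fin d → ℤ) : Set (Fin d → ℤ) :=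
  compIn (latticeGraph d) {w | h w ≠ k + 1} u

def subLC (d : ℕ) (h : (Fin d → ℤ) → ℤ) (k : ℤ) (u v : Fin d → ℤ) : Set (Fin d → ℤ) :=
  (compIn (latticeGraph d) (subLL d h k u)ᶜ v)ᶜ

def IsSublevelComponent (d : ℕ) (h : (Fin d → ℤ) → ℤ) (A : Set (Fin d → ℤ)) : Prop :=
  ∃ u v k, h u ≤ k ∧ k < h v ∧ A = subLC d h k u v

def sepComps (d : ℕ) (h : (Fin d → ℤ) → ℤ) (u v : Fin d → ℤ) : Set (Set (Fin d → ℤ)) :=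
  {A | IsSublevelComponent d h A ∧ u ∈ A ∧ v ∉ A}

def cycleEdge (d : ℕ) (v00 v01 v11 v10 : Fin d → ℤ) (e : (Fin d → ℤ) × (Fin d → ℤ)) : Prop :=
  ({e.1, e.2} : Set (Fin d → ℤ)) = {v00, v01} ∨ ({e.1, e.2} : Set (Fin d → ℤ)) = {v01, v11} ∨
  ({e.1, e.2} : Set (Fin d → ℤ)) = {v11, v10} ∨ ({e.1, e.2} : Set (Fin d → ℤ)) = {v10, v00}

def bdryGraph (d : ℕ) (U : Set (Fin d → ℤ)) : SimpleGraph (Fin d → ℤ) where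
  Adj u v := u ≠ v ∧ ∃ eu ev, eu ∈ edgeBdry d U ∧ ev ∈ edgeBdry d U ∧
    (u = eu.1 ∨ u = eu.2) ∧ (v = ev.1 ∨ v = ev.2) ∧
    ∃ a b c e, IsFourCycle d a b c e ∧ cycleEdge d a b c e eu ∧ cycleEdge d a b c e ev
  symm := by
    constructor
    rintro u v ⟨hne, eu, ev, h1, h2, h3, h4, a, b, c, e, hc, hcu, hcv⟩
    exact ⟨hne.symm, ev, eu, h2, h1, h4, h3, a, b, c, e, hc, hcv, hcu⟩
  loopless := ⟨fun u h => h.1 rfl⟩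

/-! Torus definitions -/

def torusAdj (n d : ℕ) (v w : Fin d → ZMod n) : Prop :=
  ∃ i, (w i = v i + 1 ∨ w i = v i - 1) ∧ ∀ j, j ≠ i → w j = v j

def IsProperColoring (n d : ℕ) (f : (Fin d → ZMod n) → Fin 3) : Prop :=
  ∀ v w, torusAdj n d v w → f v ≠ f w

def torusColorings (n d : ℕ) : Set ((Fin d → ZMod n) → Fin 3) :=
  {f | IsProperColoring n d f}

def colZero (n d : ℕ) : Set ((Fin d → ZMod n) → Fin 3) :=
  {f | IsProperColoring n d f ∧ f 0 = 0}

def IsTorusHHF (n d : ℕ) (h : (Fin d → ZMod n) → ℤ) : Prop :=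
  ∀ v w, torusAdj n d v w → |h v - h w| = 1

def torusHomZero (n d : ℕ) : Set ((Fin d → ZMod n) → ℤ) :=
  {h | IsTorusHHF n d h ∧ h 0 = 0}

noncomputable def cp (n d : ℕ) (par : ℕ) (k : Fin 3) (f : (Fin d → ZMod n) → Fin 3) : ℝ :=
  (Nat.card {v : Fin d → ZMod n | (∑ j, (v j).val) % 2 = par ∧ f v = k} : ℝ) /
  (Nat.card {v : Fin d → ZMod n | (∑ j, (v j).val) % 2 = par} : ℝ)

def latticeProj (n d : ℕ) (v : Fin d → ℤ) : Fin d → ZMod n := fun i => (v i : ZMod n)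

def toCol (n d : ℕ) (h : (Fin d → ℤ) → ℤ) (x : Fin d → ZMod n) : Fin 3 :=
  ⟨(h (fun i => ((x i).val : ℤ)) % 3).toNat, by
    have h1 : (0 : ℤ) ≤ h (fun i => ((x i).val : ℤ)) % 3 := Int.emod_nonneg _ (by norm_num)
    have h2 : h (fun i => ((x i).val : ℤ)) % 3 < 3 := Int.emod_lt_of_pos _ (by norm_num)
    omega⟩

end P3C
namespace Stmt7Aux
open P3C

variable {d : ℕ}

abbrev V (d : ℕ) := Fin d → ℤ

/-- unit vector -/
def E (i : Fin d) : V d := Pi.single i 1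

lemma E_apply_self (i : Fin d) : E i i = 1 := Pi.single_eq_same i 1

lemma E_apply_ne {i j : Fin d} (h : j ≠ i) : E i j = 0 := Pi.single_eq_of_ne h 1

lemma adj_step (u : V d) (i : Fin d) : (latticeGraph d).Adj u (u + E i) :=
  ⟨i, Or.inl (by simp [E]), fun j hj => by simp [E, Pi.single_eq_of_ne hj]⟩

lemma adj_iff {u v : V d} : (latticeGraph d).Adj u v ↔ ∃ i, v = u + E i ∨ u = v + E i := by
  constructor
  · rintro ⟨i, h1, h2⟩
    refine ⟨i, ?_⟩
    rcases h1 with h1 | h1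
    · left; funext j
      by_cases hj : j = i
      · subst hj; simp [E, h1]
      · simp [E, Pi.single_eq_of_ne hj, h2 j hj]
    · right; funext j
      by_cases hj : j = i
      · subst hj; simp [E, h1]
      · simp [E, Pi.single_eq_of_ne hj, (h2 j hj).symm]
  · rintro ⟨i, h | h⟩
    · subst h; exact adj_step u i
    · subst h; exact ((adj_step v i).symm)

lemma z2_add_self (x : ZMod 2) : x + x = 0 := by revert x; decide

lemma z2_cancel {a b : ZMod 2} (h : a + b = 0) : a = b := by revert h; revert a b; decide

end Stmt7Aux
namespace Stmt7Aux
open P3C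

variable {d : ℕ}

lemma Ico_single (b : ℤ) : Finset.Ico b (b+1) = {b} := by
  ext x; simp [Finset.mem_Ico]; omega

lemma sum_Ico_split (F : ℤ → ZMod 2) {a b c : ℤ} (h1 : a ≤ b) (h2 : b ≤ c) :
    ∑ s ∈ Finset.Ico a c, F s = (∑ s ∈ Finset.Ico a b, F s) + ∑ s ∈ Finset.Ico b c, F s := by
  rw [← Finset.Ico_union_Ico_eq_Ico h1 h2, Finset.sum_union (Finset.Ico_disjoint_Ico_consecutive a b c)]

/-- parity of f along the segment from u to u + t • E i -/
noncomputable def seg (f : V d → V d → ZMod 2) (u : V d) (i : Fin d) (t : ℤ) : ZMod 2 :=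
  ∑ s ∈ Finset.Ico (min t 0) (max t 0), f (u + s • E i) (u + (s+1) • E i)

lemma seg_zero (f : V d → V d → ZMod 2) (u : V d) (i : Fin d) : seg f u i 0 = 0 := by
  simp [seg]

lemma seg_succ (f : V d → V d → ZMod 2) (u : V d) (i : Fin d) (t : ℤ) :
    seg f u i (t+1) = seg f u i t + f (u + t • E i) (u + (t+1) • E i) := by
  rcases le_or_gt 0 t with h | h
  · unfold seg
    rw [min_eq_right (by omega : (0:ℤ) ≤ t+1), max_eq_left (by omega : (0:ℤ) ≤ t+1),
        min_eq_right h, max_eq_left h,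
        sum_Ico_split _ h (by omega), Ico_single, Finset.sum_singleton]
  · unfold seg
    rw [min_eq_left (by omega : t+1 ≤ (0:ℤ)), max_eq_right (by omega : t+1 ≤ (0:ℤ)),
        min_eq_left (by omega : t ≤ (0:ℤ)), max_eq_right (by omega : t ≤ (0:ℤ)),
        sum_Ico_split _ (by omega : t ≤ t+1) (by omega), Ico_single, Finset.sum_singleton]
    rw [add_comm (f (u + t • E i) (u + (t+1) • E i)), add_assoc, z2_add_self, add_zero]

section Transport

variable (f : V d → V d → ZMod 2)
variable (hsq : ∀ (u : V d) (i j : Fin d), i ≠ j →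
    f u (u + E i) + f (u + E i) (u + E i + E j) + f u (u + E j) + f (u + E j) (u + E j + E i) = 0)

include hsq

lemma transport_step {i j : Fin d} (hij : i ≠ j) (u : V d) (t : ℤ)
    (ih : seg f u i t + seg f (u + E j) i t
        = f u (u + E j) + f (u + t • E i) (u + t • E i + E j)) :
    seg f u i (t+1) + seg f (u + E j) i (t+1)
        = f u (u + E j) + f (u + (t+1) • E i) (u + (t+1) • E i + E j) := by
  have hq := hsq (u + t • E i) i j hij
  rw [seg_succ, seg_succ]
  have htwo : (2 : ZMod 2) = 0 := by decide
  simp only [add_smul, one_smul, add_assoc, add_comm, add_left_comm] at ih hq ⊢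
  linear_combination ih + hq - (f (u + (E i + t • E i)) (u + (E i + (E j + t • E i)))) * htwo

lemma transport_step_down {i j : Fin d} (hij : i ≠ j) (u : V d) (t : ℤ)
    (ih : seg f u i (t+1) + seg f (u + E j) i (t+1)
        = f u (u + E j) + f (u + (t+1) • E i) (u + (t+1) • E i + E j)) :
    seg f u i t + seg f (u + E j) i t
        = f u (u + E j) + f (u + t • E i) (u + t • E i + E j) := by
  have hq := hsq (u + t • E i) i j hij
  rw [seg_succ, seg_succ] at ih
  have htwo : (2 : ZMod 2) = 0 := by decide
  simp only [add_smul, one_smul, add_assoc, add_comm, add_left_comm] at ih hq ⊢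
  linear_combination ih + hq - (f (u + t • E i) (u + (E j + t • E i)) + f (u + t • E i) (u + (E i + t • E i)) + f (u + (E j + t • E i)) (u + (E i + (E j + t • E i)))) * htwo

lemma transport {i j : Fin d} (hij : i ≠ j) (u : V d) (t : ℤ) :
    seg f u i t + seg f (u + E j) i t
        = f u (u + E j) + f (u + t • E i) (u + t • E i + E j) := by
  induction t using Int.induction_on with
  | zero => simp [seg_zero, z2_add_self]
  | succ k ih => exact transport_step f hsq hij u k ih
  | pred k ih =>
      have e : (-(k:ℤ)) = (-(k:ℤ)-1)+1 := by ring
      rw [e] at ih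
      exact transport_step_down f hsq hij u _ ih

end Transport

end Stmt7Aux
namespace Stmt7Aux
open P3C

variable {d : ℕ}

lemma z2_shift {a b c : ZMod 2} (h : a + b = c) : a = b + c := by
  revert h; revert a b c; decide

/-- truncation: coordinates < k kept, rest zeroed -/
def Q (u : V d) (k : ℕ) : V d := fun j => if (j : ℕ) < k then u j else 0

lemma Q_ge (u : V d) {k : ℕ} (h : d ≤ k) : Q u k = u := by
  funext j; simp [Q, lt_of_lt_of_le j.isLt h]

lemma Q_succ (u : V d) {k : ℕ} (h : k < d) :
    Q u (k+1) = Q u k + (u ⟨k, h⟩) • E ⟨k, h⟩ := by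
  funext j
  simp only [Q, Pi.add_apply, Pi.smul_apply, E, smul_eq_mul]
  rcases lt_trichotomy (j : ℕ) k with hj | hj | hj
  · rw [if_pos (by omega), if_pos hj, Pi.single_eq_of_ne (by simp [Fin.ext_iff]; omega), mul_zero, add_zero]
  · have : j = ⟨k, h⟩ := Fin.ext hj
    subst this
    rw [if_pos (by omega), if_neg (by omega), Pi.single_eq_same, mul_one, zero_add]
  · rw [if_neg (by omega), if_neg (by omega), Pi.single_eq_of_ne (by simp [Fin.ext_iff]; omega), mul_zero, add_zero]

lemma Q_add_E_of_lt (u : V d) {k : ℕ} {i : Fin d} (h : (i : ℕ) < k) :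
    Q (u + E i) k = Q u k + E i := by
  funext j
  simp only [Q, Pi.add_apply, E]
  by_cases hj : (j : ℕ) < k
  · simp [hj]
  · rw [if_neg hj, if_neg hj, Pi.single_eq_of_ne (by simp [Fin.ext_iff]; omega), add_zero]

lemma Q_add_E_of_ge (u : V d) {k : ℕ} {i : Fin d} (h : ¬ ((i : ℕ) < k)) :
    Q (u + E i) k = Q u k := by
  funext j
  simp only [Q, Pi.add_apply, E]
  by_cases hj : (j : ℕ) < k
  · rw [if_pos hj, if_pos hj, Pi.single_eq_of_ne (by simp [Fin.ext_iff]; omega), add_zero]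
  · simp [hj]

lemma addE_apply_ne (u : V d) {i j : Fin d} (h : j ≠ i) : (u + E i) j = u j := by
  simp [E, Pi.single_eq_of_ne h]

lemma addE_apply_self (u : V d) (i : Fin d) : (u + E i) i = u i + 1 := by
  simp [E]

/-- one summand of the potential -/
noncomputable def gseg (f : V d → V d → ZMod 2) (u : V d) (k : ℕ) : ZMod 2 :=
  if h : k < d then seg f (Q u k) ⟨k, h⟩ (u ⟨k, h⟩) else 0

/-- the potential function -/
noncomputable def g (f : V d → V d → ZMod 2) (u : V d) : ZMod 2 :=
  ∑ k ∈ Finset.range d, gseg f u k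

lemma tele (a : ℕ → ZMod 2) {m n : ℕ} (h : m ≤ n) :
    ∑ k ∈ Finset.Ico m n, (a k + a (k+1)) = a m + a n := by
  induction n, h using Nat.le_induction with
  | base => rw [Finset.Ico_self, Finset.sum_empty]; exact (z2_add_self (a m)).symm
  | succ n hn ih =>
      rw [Finset.sum_Ico_succ_top hn, ih]
      linear_combination z2_add_self (a n)

section GStep

variable (f : V d → V d → ZMod 2)
variable (hsq : ∀ (u : V d) (i j : Fin d), i ≠ j →
    f u (u + E i) + f (u + E i) (u + E i + E j) + f u (u + E j) + f (u + E j) (u + E j + E i) = 0)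

include hsq

theorem g_step (u : V d) (i : Fin d) : g f (u + E i) = g f u + f u (u + E i) := by
  classical
  have hid : (i : ℕ) < d := i.isLt
  set a : ℕ → ZMod 2 := fun k => f (Q u k) (Q u k + E i) with ha
  have hsum : g f (u + E i) + g f u
      = ∑ k ∈ Finset.range d, (gseg f (u + E i) k + gseg f u k) := by
    rw [g, g, ← Finset.sum_add_distrib]
  have e1 : ∑ k ∈ Finset.Ico 0 (i : ℕ), (gseg f (u + E i) k + gseg f u k) = 0 := by
    apply Finset.sum_eq_zero
    intro k hk
    rw [Finset.mem_Ico] at hk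
    have hkd : k < d := lt_trans hk.2 hid
    have h1 : gseg f (u + E i) k = gseg f u k := by
      rw [gseg, gseg, dif_pos hkd, dif_pos hkd,
          Q_add_E_of_ge u (by omega), addE_apply_ne u (by simp [Fin.ext_iff]; omega)]
    rw [h1, z2_add_self]
  have e2 : gseg f (u + E i) (i : ℕ) + gseg f u (i : ℕ) = a ((i : ℕ) + 1) := by
    rw [gseg, gseg, dif_pos hid, dif_pos hid,
        Q_add_E_of_ge u (by omega)]
    have heta : (⟨(i : ℕ), hid⟩ : Fin d) = i := rfl
    rw [heta, addE_apply_self, seg_succ]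
    have hq1 : Q u ((i:ℕ)+1) = Q u (i:ℕ) + (u i) • E i := by
      have := Q_succ u hid; rwa [heta] at this
    have hq2 : Q u (i:ℕ) + (u i + 1) • E i = Q u ((i:ℕ)+1) + E i := by
      rw [hq1, add_smul, one_smul, add_assoc]
    rw [ha]
    simp only []
    rw [← hq1, hq2]
    linear_combination z2_add_self (seg f (Q u (i:ℕ)) i (u i))
  have e3 : ∑ k ∈ Finset.Ico ((i : ℕ)+1) d, (gseg f (u + E i) k + gseg f u k)
      = a ((i : ℕ)+1) + a d := by
    rw [Finset.sum_congr rfl (fun k hk => ?_), tele a (by omega)]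
    rw [Finset.mem_Ico] at hk
    have hkd : k < d := hk.2
    have hik : (i : ℕ) < k := by omega
    have hne : (⟨k, hkd⟩ : Fin d) ≠ i := by simp [Fin.ext_iff]; omega
    rw [gseg, gseg, dif_pos hkd, dif_pos hkd, Q_add_E_of_lt u hik,
        addE_apply_ne u hne]
    have ht := transport f hsq hne (Q u k) (u ⟨k, hkd⟩)
    have hq : Q u k + (u ⟨k, hkd⟩) • E ⟨k, hkd⟩ = Q u (k+1) := (Q_succ u hkd).symm
    rw [hq] at ht
    rw [ha]
    simp only []
    linear_combination ht
  have main : g f (u + E i) + g f u = f u (u + E i) := by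
    rw [hsum, Finset.range_eq_Ico,
        ← Finset.sum_Ico_consecutive (fun k => gseg f (u + E i) k + gseg f u k)
          (Nat.zero_le (i:ℕ)) (Nat.le_of_lt hid),
        ← Finset.sum_Ico_consecutive (fun k => gseg f (u + E i) k + gseg f u k)
          (Nat.le_succ (i:ℕ)) (Nat.succ_le_of_lt hid),
        e1, e3]
    have : Finset.Ico (i:ℕ) ((i:ℕ)+1) = {(i:ℕ)} := by ext x; rw [Finset.mem_Ico, Finset.mem_singleton]; omega
    rw [this, Finset.sum_singleton, e2]
    have had : a d = f u (u + E i) := by rw [ha]; simp only []; rw [Q_ge u (le_refl d)]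
    rw [← had]
    linear_combination z2_add_self (a ((i:ℕ)+1))
  exact z2_shift main

end GStep

end Stmt7Aux
namespace Stmt7Aux
open P3C

variable {d : ℕ}

section GAdj

variable (f : V d → V d → ZMod 2)
variable (hsymm : ∀ u v, f u v = f v u)
variable (hsq : ∀ (u : V d) (i j : Fin d), i ≠ j →
    f u (u + E i) + f (u + E i) (u + E i + E j) + f u (u + E j) + f (u + E j) (u + E j + E i) = 0)

include hsymm hsq

lemma g_adj {u v : V d} (h : (latticeGraph d).Adj u v) : g f u + g f v = f u v := by
  rcases adj_iff.mp h with ⟨i, rfl | rfl⟩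
  · rw [g_step f hsq u i]
    linear_combination z2_add_self (g f u)
  · rw [g_step f hsq v i, hsymm v (v + E i)]
    linear_combination z2_add_self (g f v)

lemma g_walk_const {S : Set (V d)} (h0 : ∀ x y, x ∈ S → y ∈ S → f x y = 0) :
    ∀ {x y : ↥S} (_ : ((latticeGraph d).induce S).Walk x y),
      g f (x : V d) = g f (y : V d) := by
  intro x y W
  induction W with
  | nil => rfl
  | @cons x w y h p ih =>
      have hadj : (latticeGraph d).Adj (x : V d) (w : V d) := h
      have h1 : g f (x : V d) + g f (w : V d) = 0 := by
        rw [g_adj f hsymm hsq hadj]; exact h0 _ _ x.2 w.2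
      exact (z2_cancel h1).trans ih

lemma g_const_on {S : Set (V d)} (h0 : ∀ x y, x ∈ S → y ∈ S → f x y = 0)
    {x y : ↥S} (hR : ((latticeGraph d).induce S).Reachable x y) :
    g f (x : V d) = g f (y : V d) :=
  hR.elim (fun W => g_walk_const f hsymm hsq h0 W)

lemma g_const_on' {S : Set (V d)} (h0 : ∀ x y, x ∈ S → y ∈ S → f x y = 0)
    {x y : V d} (hx : x ∈ S) (hy : y ∈ S)
    (hR : ((latticeGraph d).induce S).Reachable ⟨x, hx⟩ ⟨y, hy⟩) :
    g f x = g f y := by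
  have h := g_const_on f hsymm hsq h0 hR
  simpa using h

end GAdj

/-- the lattice graph is preconnected -/
lemma lattice_preconnected : ∀ a c : V d, (latticeGraph d).Reachable a c := by
  intro a c
  generalize hN : (∑ j, (a j - c j).natAbs) = N
  induction N using Nat.strong_induction_on generalizing a with
  | _ N ih =>
    rcases Nat.eq_zero_or_pos N with h0 | hpos
    · subst h0
      have : a = c := by
        funext j
        have := Finset.sum_eq_zero_iff.mp hN j (Finset.mem_univ j)
        omega
      rw [this]
    · have hex : ∃ j, a j ≠ c j := by
        by_contra hcon
        push_neg at hcon
        have : (∑ j, (a j - c j).natAbs) = 0 := Finset.sum_eq_zero (fun j _ => by rw [hcon j]; omega)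
        omega
      obtain ⟨i, hi⟩ := hex
      set a' : V d := Function.update a i (if a i < c i then a i + 1 else a i - 1) with ha'
      have hadj : (latticeGraph d).Adj a a' := by
        refine ⟨i, ?_, fun j hj => by rw [ha', Function.update_of_ne hj _ a]⟩
        rw [ha', Function.update_self]
        split <;> omega
      have hsum : (∑ j, (a' j - c j).natAbs) = N - 1 := by
        have hsplit : ∀ (b : V d), (∑ j, (b j - c j).natAbs)
            = (∑ j ∈ Finset.univ.erase i, (b j - c j).natAbs) + (b i - c i).natAbs := by
          intro b
          rw [Finset.sum_erase_add Finset.univ _ (Finset.mem_univ i)]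
        have he : ∀ j ∈ Finset.univ.erase i, (a' j - c j).natAbs = (a j - c j).natAbs := by
          intro j hj
          rw [ha', Function.update_of_ne (Finset.ne_of_mem_erase hj) _ a]
        have hii : (a' i - c i).natAbs = (a i - c i).natAbs - 1 := by
          rw [ha', Function.update_self]
          split <;> omega
        have hge : 1 ≤ (a i - c i).natAbs := by omega
        rw [hsplit a', Finset.sum_congr rfl he, hii]
        rw [hsplit a] at hN
        omega
      have hlt : N - 1 < N := by omega
      exact (hadj.reachable).trans (ih (N-1) hlt a' hsum)

/-- existence of a crossing edge -/
lemma exists_crossing {A : Set (V d)} (h1 : A ≠ ∅) (h2 : A ≠ Set.univ) :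
    ∃ x y, (latticeGraph d).Adj x y ∧ x ∈ A ∧ y ∉ A := by
  obtain ⟨a, ha⟩ := Set.nonempty_iff_ne_empty.mpr h1
  obtain ⟨c, hc⟩ : ∃ c, c ∉ A := by
    by_contra hcon; push_neg at hcon
    exact h2 (Set.eq_univ_of_forall hcon)
  obtain ⟨W⟩ := lattice_preconnected a c
  clear h1 h2
  induction W with
  | nil => exact absurd ha hc
  | @cons x w y h p ih =>
      by_cases hw : w ∈ A
      · exact ih hw hc
      · exact ⟨x, w, h, ha, hw⟩

/-- extend membership in a connected component within S along an edge -/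
lemma compIn_extend {G : SimpleGraph (V d)} {S : Set (V d)} {u v w : V d}
    (hv : v ∈ compIn G S u) (hw : w ∈ S) (hadj : G.Adj v w) : w ∈ compIn G S u := by
  obtain ⟨hu, hvS, hR⟩ := hv
  refine ⟨hu, hw, hR.trans ?_⟩
  exact SimpleGraph.Adj.reachable (by exact hadj)

lemma compIn_self {G : SimpleGraph (V d)} {S : Set (V d)} {u : V d} (hu : u ∈ S) :
    u ∈ compIn G S u := ⟨hu, hu, SimpleGraph.Reachable.refl _⟩

lemma compIn_iff_adj {G : SimpleGraph (V d)} {S : Set (V d)} {u v w : V d}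
    (hv : v ∈ S) (hw : w ∈ S) (hadj : G.Adj v w) :
    (v ∈ compIn G S u ↔ w ∈ compIn G S u) :=
  ⟨fun h => compIn_extend h hw hadj, fun h => compIn_extend h hv hadj.symm⟩

lemma connectedIn_of_compIn {G : SimpleGraph (V d)} {S : Set (V d)} {b : V d} (hb : b ∈ S)
    (hall : ∀ x ∈ S, x ∈ compIn G S b) : ConnectedIn G S := by
  rw [ConnectedIn, SimpleGraph.connected_iff]
  constructor
  · intro x y
    obtain ⟨hb1, hxS, hRx⟩ := hall x.1 x.2
    obtain ⟨hb2, hyS, hRy⟩ := hall y.1 y.2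
    have ex : (⟨x.1, hxS⟩ : ↥S) = x := Subtype.ext rfl
    have ey : (⟨y.1, hyS⟩ : ↥S) = y := Subtype.ext rfl
    have eb : (⟨b, hb1⟩ : ↥S) = (⟨b, hb2⟩ : ↥S) := rfl
    rw [ex] at hRx
    rw [ey] at hRy
    exact hRx.symm.trans (eb ▸ hRy)
  · exact ⟨⟨b, hb⟩⟩

end Stmt7Aux
namespace Stmt7Aux
open P3C

variable {d : ℕ}

section Cut

variable {A : Set (V d)} (hA : BiConnected d A)
variable (f : V d → V d → ZMod 2)
variable (hsymm : ∀ u v, f u v = f v u)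
variable (hsq : ∀ (u : V d) (i j : Fin d), i ≠ j →
    f u (u + E i) + f (u + E i) (u + E i + E j) + f u (u + E j) + f (u + E j) (u + E j + E i) = 0)
variable (hnull : ∀ x y, f x y ≠ 0 → (x ∈ A ∧ y ∉ A) ∨ (y ∈ A ∧ x ∉ A))

include hA hsymm hsq hnull

theorem cut {a0 b0 : V d} (hadj0 : (latticeGraph d).Adj a0 b0)
    (ha0 : a0 ∈ A) (hb0 : b0 ∉ A) (hf0 : f a0 b0 = 1)
    {x y : V d} (hx : x ∈ A) (hy : y ∉ A) (hadj : (latticeGraph d).Adj x y) :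
    f x y = 1 := by
  have h0A : ∀ p q, p ∈ A → q ∈ A → f p q = 0 := by
    intro p q hp hq
    by_contra hne
    rcases hnull p q hne with ⟨_, h⟩ | ⟨_, h⟩
    · exact h hq
    · exact h hp
  have h0C : ∀ p q, p ∈ Aᶜ → q ∈ Aᶜ → f p q = 0 := by
    intro p q hp hq
    by_contra hne
    rcases hnull p q hne with ⟨h, _⟩ | ⟨h, _⟩
    · exact hp h
    · exact hq h
  have hconnA : ((latticeGraph d).induce A).Connected := hA.2.2.1
  have hconnC : ((latticeGraph d).induce Aᶜ).Connected := hA.2.2.2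
  have hgx : g f a0 = g f x :=
    g_const_on' f hsymm hsq h0A ha0 hx (hconnA.preconnected ⟨a0, ha0⟩ ⟨x, hx⟩)
  have hgy : g f b0 = g f y :=
    g_const_on' f hsymm hsq h0C hb0 hy (hconnC.preconnected ⟨b0, hb0⟩ ⟨y, hy⟩)
  have e1 : g f a0 + g f b0 = f a0 b0 := g_adj f hsymm hsq hadj0
  have e2 : g f x + g f y = f x y := g_adj f hsymm hsq hadj
  rw [← e2, ← hgx, ← hgy, e1, hf0]

end Cut

theorem part1 {A : Set (V d)} (hA : BiConnected d A) :
    ConnectedIn (latticeGraph d) (inBdry d A ∪ outBdry d A) := by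
  classical
  set G := latticeGraph d with hG
  set B := inBdry d A ∪ outBdry d A with hB
  have hmemB : ∀ {x y : V d}, G.Adj x y → x ∈ A → y ∉ A → x ∈ B ∧ y ∈ B := by
    intro x y hadj hx hy
    constructor
    · exact Or.inl ⟨hx, fun hmin => hy (hmin.2 y hadj)⟩
    · exact Or.inr ⟨Or.inr ⟨x, hx, hadj.symm⟩, hy⟩
  obtain ⟨a0, b0, hadj0, ha0, hb0⟩ := exists_crossing hA.1 hA.2.1
  have hb0B : b0 ∈ B := (hmemB hadj0 ha0 hb0).2
  set K := compIn G B b0 with hK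
  set f : V d → V d → ZMod 2 :=
    fun u v => if ((u ∈ A ∧ v ∉ A) ∨ (v ∈ A ∧ u ∉ A)) ∧ u ∈ K ∧ v ∈ K then 1 else 0 with hf
  have hsymm : ∀ u v, f u v = f v u := by
    intro u v; simp only [hf]; exact if_congr (by tauto) rfl rfl
  have hKiff : ∀ {u v : V d}, G.Adj u v → u ∈ B → v ∈ B → (u ∈ K ↔ v ∈ K) :=
    fun h hu hv => compIn_iff_adj hu hv h
  have fval : ∀ {x y : V d}, G.Adj x y → ((x ∈ A ∧ y ∉ A) ∨ (y ∈ A ∧ x ∉ A)) →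
      f x y = (if x ∈ K then 1 else 0) := by
    intro x y h hc
    have hxy : x ∈ B ∧ y ∈ B := by
      rcases hc with ⟨h1, h2⟩ | ⟨h1, h2⟩
      · exact hmemB h h1 h2
      · exact ⟨(hmemB h.symm h1 h2).2, (hmemB h.symm h1 h2).1⟩
    by_cases hKx : x ∈ K
    · simp only [hf]
      rw [if_pos ⟨hc, hKx, (hKiff h hxy.1 hxy.2).mp hKx⟩, if_pos hKx]
    · simp only [hf]
      rw [if_neg (fun hcon => hKx hcon.2.1), if_neg hKx]
  have fzero : ∀ {x y : V d}, (x ∈ A ↔ y ∈ A) → f x y = 0 := by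
    intro x y h; simp only [hf]; rw [if_neg]; tauto
  have hsq : ∀ (u : V d) (i j : Fin d), i ≠ j →
      f u (u + E i) + f (u + E i) (u + E i + E j) + f u (u + E j) + f (u + E j) (u + E j + E i) = 0 := by
    intro u i j hij
    have hcomm : u + E j + E i = u + E i + E j := by rw [add_right_comm]
    rw [hcomm]
    have a12 : G.Adj u (u + E i) := adj_step u i
    have a23 : G.Adj (u + E i) (u + E i + E j) := adj_step _ j
    have a14 : G.Adj u (u + E j) := adj_step u j
    have a43 : G.Adj (u + E j) (u + E i + E j) := by
      rw [← hcomm]; exact adj_step _ i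
    by_cases m1 : u ∈ A <;> by_cases m2 : u + E i ∈ A <;>
      by_cases m3 : u + E i + E j ∈ A <;> by_cases m4 : u + E j ∈ A
    · -- TTTT
      rw [fzero (iff_of_true m1 m2), fzero (iff_of_true m2 m3),
          fzero (iff_of_true m1 m4), fzero (iff_of_true m4 m3)]
      simp
    · -- TTTF
      rw [fzero (iff_of_true m1 m2), fzero (iff_of_true m2 m3),
          fval a14 (Or.inl ⟨m1, m4⟩), fval a43 (Or.inr ⟨m3, m4⟩)]
      have h1 := hKiff a14 (hmemB a14 m1 m4).1 (hmemB a14 m1 m4).2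
      simp only [propext h1, z2_add_self, add_zero, zero_add]
    · -- TTFT
      rw [fzero (iff_of_true m1 m2), fval a23 (Or.inl ⟨m2, m3⟩),
          fzero (iff_of_true m1 m4), fval a43 (Or.inl ⟨m4, m3⟩)]
      have hv2B := (hmemB a23 m2 m3).1
      have hv3B := (hmemB a23 m2 m3).2
      have hv4B := (hmemB a43 m4 m3).1
      have h1 := hKiff a23 hv2B hv3B
      have h2 := (hKiff a43 hv4B hv3B).symm
      simp only [propext h1, propext h2.symm, z2_add_self, add_zero, zero_add]
    · -- TTFF : crossing E2 (v2→v3) ind v2, E3 (v1→v4) ind v1, E4 zero(F,F)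
      rw [fzero (iff_of_true m1 m2), fval a23 (Or.inl ⟨m2, m3⟩),
          fval a14 (Or.inl ⟨m1, m4⟩), fzero (iff_of_false m4 m3)]
      have hv2B := (hmemB a23 m2 m3).1
      have hv1B := (hmemB a14 m1 m4).1
      have h1 := hKiff a12 hv1B hv2B
      simp only [propext h1, z2_add_self, add_zero, zero_add]
    · -- TFTT : E1 cross ind v1, E2 cross (v3∈A, v2∉) ind v2? f (v2) (v3) with v3∈A, v2∉A: Or.inr ⟨m3, m2⟩ => ind v2
      rw [fval a12 (Or.inl ⟨m1, m2⟩), fval a23 (Or.inr ⟨m3, m2⟩),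
          fzero (iff_of_true m1 m4), fzero (iff_of_true m4 m3)]
      have hv1B := (hmemB a12 m1 m2).1
      have hv2B := (hmemB a12 m1 m2).2
      have h1 := hKiff a12 hv1B hv2B
      simp only [propext h1, z2_add_self, add_zero, zero_add]
    · -- TFTF : all four cross
      rw [fval a12 (Or.inl ⟨m1, m2⟩), fval a23 (Or.inr ⟨m3, m2⟩),
          fval a14 (Or.inl ⟨m1, m4⟩), fval a43 (Or.inr ⟨m3, m4⟩)]
      have hv1B := (hmemB a12 m1 m2).1
      have hv2B := (hmemB a12 m1 m2).2
      have hv3B := (hmemB a23.symm m3 m2).1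
      have hv4B := (hmemB a43.symm m3 m4).2
      have h1 := hKiff a12 hv1B hv2B
      have h2 := hKiff a14 hv1B hv4B
      simp only [propext h1.symm, propext h2.symm, z2_add_self, add_zero, zero_add]
    · -- TFFT : E1 cross ind v1, E4 cross (v4∈A, v3∉) ind v4
      rw [fval a12 (Or.inl ⟨m1, m2⟩), fzero (iff_of_false m2 m3),
          fzero (iff_of_true m1 m4), fval a43 (Or.inl ⟨m4, m3⟩)]
      have hv1B := (hmemB a12 m1 m2).1
      have hv4B := (hmemB a43 m4 m3).1
      have h1 := hKiff a14 hv1B hv4B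
      simp only [propext h1, z2_add_self, add_zero, zero_add]
    · -- TFFF : E1 cross ind v1, E3 cross ind v1
      rw [fval a12 (Or.inl ⟨m1, m2⟩), fzero (iff_of_false m2 m3),
          fval a14 (Or.inl ⟨m1, m4⟩), fzero (iff_of_false m4 m3)]
      simp only [z2_add_self, add_zero, zero_add]
    · -- FTTT : E1 cross (v2∈A, v1∉) ind v1, E3 cross (v4∈A, v1∉) ind v1
      rw [fval a12 (Or.inr ⟨m2, m1⟩), fzero (iff_of_true m2 m3),
          fval a14 (Or.inr ⟨m4, m1⟩), fzero (iff_of_true m4 m3)]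
      simp only [z2_add_self, add_zero, zero_add]
    · -- FTTF : E1 cross ind v1, E4 cross (v3∈A, v4∉) ind v4
      rw [fval a12 (Or.inr ⟨m2, m1⟩), fzero (iff_of_true m2 m3),
          fzero (iff_of_false m1 m4), fval a43 (Or.inr ⟨m3, m4⟩)]
      have hv1B := (hmemB a12.symm m2 m1).2
      have hv4B := (hmemB a43.symm m3 m4).2
      have h1 := hKiff a14 hv1B hv4B
      simp only [propext h1, z2_add_self, add_zero, zero_add]
    · -- FTFT : E1 cross ind v1, E2 cross (v2∈A,v3∉) ind v2, E3 cross ind v1, E4 cross (v4∈A,v3∉) ind v4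
      rw [fval a12 (Or.inr ⟨m2, m1⟩), fval a23 (Or.inl ⟨m2, m3⟩),
          fval a14 (Or.inr ⟨m4, m1⟩), fval a43 (Or.inl ⟨m4, m3⟩)]
      have hv1B := (hmemB a12.symm m2 m1).2
      have hv2B := (hmemB a12.symm m2 m1).1
      have hv4B := (hmemB a43 m4 m3).1
      have h1 := hKiff a12 hv1B hv2B
      have h2 := hKiff a14 hv1B hv4B
      simp only [propext h1.symm, propext h2.symm, z2_add_self, add_zero, zero_add]
    · -- FTFF : E1 cross ind v1, E2 cross ind v2
      rw [fval a12 (Or.inr ⟨m2, m1⟩), fval a23 (Or.inl ⟨m2, m3⟩),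
          fzero (iff_of_false m1 m4), fzero (iff_of_false m4 m3)]
      have hv1B := (hmemB a12.symm m2 m1).2
      have hv2B := (hmemB a12.symm m2 m1).1
      have h1 := hKiff a12 hv1B hv2B
      simp only [propext h1, z2_add_self, add_zero, zero_add]
    · -- FFTT : E2 cross (v3∈A, v2∉) ind v2, E3 cross (v4∈A, v1∉) ind v1
      rw [fzero (iff_of_false m1 m2), fval a23 (Or.inr ⟨m3, m2⟩),
          fval a14 (Or.inr ⟨m4, m1⟩), fzero (iff_of_true m4 m3)]
      have hv1B := (hmemB a14.symm m4 m1).2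
      have hv2B := (hmemB a23.symm m3 m2).2
      have h1 := hKiff a12 hv1B hv2B
      simp only [propext h1, z2_add_self, add_zero, zero_add]
    · -- FFTF : E2 cross ind v2, E4 cross (v3∈A, v4∉) ind v4
      rw [fzero (iff_of_false m1 m2), fval a23 (Or.inr ⟨m3, m2⟩),
          fzero (iff_of_false m1 m4), fval a43 (Or.inr ⟨m3, m4⟩)]
      have hv2B := (hmemB a23.symm m3 m2).2
      have hv3B := (hmemB a23.symm m3 m2).1
      have hv4B := (hmemB a43.symm m3 m4).2
      have h1 := hKiff a23 hv2B hv3B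
      have h2 := hKiff a43 hv4B hv3B
      simp only [propext h1, propext h2, z2_add_self, add_zero, zero_add]
    · -- FFFT : E3 cross ind v1, E4 cross (v4∈A, v3∉) ind v4
      rw [fzero (iff_of_false m1 m2), fzero (iff_of_false m2 m3),
          fval a14 (Or.inr ⟨m4, m1⟩), fval a43 (Or.inl ⟨m4, m3⟩)]
      have hv1B := (hmemB a14.symm m4 m1).2
      have hv4B := (hmemB a14.symm m4 m1).1
      have h1 := hKiff a14 hv1B hv4B
      simp only [propext h1.symm, z2_add_self, add_zero, zero_add]
    · -- FFFF
      rw [fzero (iff_of_false m1 m2), fzero (iff_of_false m2 m3),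
          fzero (iff_of_false m1 m4), fzero (iff_of_false m4 m3)]
      simp
  have hnull : ∀ x y, f x y ≠ 0 → (x ∈ A ∧ y ∉ A) ∨ (y ∈ A ∧ x ∉ A) := by
    intro x y h
    simp only [hf] at h
    by_cases hc : ((x ∈ A ∧ y ∉ A) ∨ (y ∈ A ∧ x ∉ A)) ∧ x ∈ K ∧ y ∈ K
    · exact hc.1
    · exact absurd (if_neg hc) h
  have ha0K : a0 ∈ K := by
    have := hKiff hadj0 (hmemB hadj0 ha0 hb0).1 hb0B
    exact this.mpr (compIn_self hb0B)
  have hf0 : f a0 b0 = 1 := by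
    rw [fval hadj0 (Or.inl ⟨ha0, hb0⟩), if_pos ha0K]
  have hcut : ∀ {x y : V d}, x ∈ A → y ∉ A → (latticeGraph d).Adj x y → f x y = 1 :=
    fun hx hy hadj => cut hA f hsymm hsq hnull hadj0 ha0 hb0 hf0 hx hy hadj
  have hKcross : ∀ {x y : V d}, G.Adj x y → x ∈ A → y ∉ A → x ∈ K ∧ y ∈ K := by
    intro x y hadj hx hy
    have h1 := hcut hx hy hadj
    simp only [hf] at h1
    by_cases hc : ((x ∈ A ∧ y ∉ A) ∨ (y ∈ A ∧ x ∉ A)) ∧ x ∈ K ∧ y ∈ K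
    · exact hc.2
    · rw [if_neg hc] at h1; exact absurd h1 (by decide)
  have hall : ∀ v ∈ B, v ∈ compIn G B b0 := by
    intro v hv
    rcases hv with ⟨hvA, hvmin⟩ | ⟨hvp, hvA⟩
    · have : ∃ w, G.Adj v w ∧ w ∉ A := by
        by_contra hcon
        push_neg at hcon
        exact hvmin ⟨hvA, fun w hw => hcon w hw⟩
      obtain ⟨w, hw1, hw2⟩ := this
      exact (hKcross hw1 hvA hw2).1
    · rcases hvp with hvA' | ⟨w, hwA, hadj⟩
      · exact absurd hvA' hvA
      · exact (hKcross hadj.symm hwA hvA).2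
  exact connectedIn_of_compIn hb0B hall

end Stmt7Aux
namespace Stmt7Aux
open P3C

variable {d : ℕ}

theorem part2 {A : Set (V d)} (hA : BiConnected d A) :
    ConnectedIn (latticeGraph d) (vplus d (vplus d A) \ A) := by
  classical
  set G := latticeGraph d with hG
  set T := vplus d (vplus d A) \ A with hT
  have hTout : ∀ {x y : V d}, G.Adj x y → x ∈ A → y ∉ A → y ∈ T := by
    intro x y hadj hx hy
    exact ⟨Or.inl (Or.inr ⟨x, hx, hadj.symm⟩), hy⟩
  have hT2 : ∀ {v w x : V d}, G.Adj v w → w ∉ A → v ∉ A → G.Adj w x → x ∈ A → v ∈ T := by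
    intro v w x h1 hw hv h2 hx
    exact ⟨Or.inr ⟨w, Or.inr ⟨x, hx, h2⟩, h1⟩, hv⟩
  obtain ⟨a0, b0, hadj0, ha0, hb0⟩ := exists_crossing hA.1 hA.2.1
  have hb0T : b0 ∈ T := hTout hadj0 ha0 hb0
  set K := compIn G T b0 with hK
  set f : V d → V d → ZMod 2 :=
    fun u v => if (u ∈ A ∧ v ∉ A ∧ v ∈ K) ∨ (v ∈ A ∧ u ∉ A ∧ u ∈ K) then 1 else 0 with hf
  have hsymm : ∀ u v, f u v = f v u := by
    intro u v; simp only [hf]; exact if_congr (by tauto) rfl rfl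
  have hKiff : ∀ {u v : V d}, G.Adj u v → u ∈ T → v ∈ T → (u ∈ K ↔ v ∈ K) :=
    fun h hu hv => compIn_iff_adj hu hv h
  have fvalA : ∀ {x y : V d}, x ∈ A → y ∉ A → f x y = (if y ∈ K then 1 else 0) := by
    intro x y hx hy
    simp only [hf]
    by_cases hKy : y ∈ K
    · rw [if_pos (Or.inl ⟨hx, hy, hKy⟩), if_pos hKy]
    · rw [if_neg ?_, if_neg hKy]
      rintro (⟨_, _, h⟩ | ⟨h, _, _⟩)
      · exact hKy h
      · exact hy h
  have fvalB : ∀ {x y : V d}, y ∈ A → x ∉ A → f x y = (if x ∈ K then 1 else 0) := by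
    intro x y hy hx
    rw [hsymm]; exact fvalA hy hx
  have fzero : ∀ {x y : V d}, (x ∈ A ↔ y ∈ A) → f x y = 0 := by
    intro x y h; simp only [hf]; rw [if_neg]; tauto
  have hsq : ∀ (u : V d) (i j : Fin d), i ≠ j →
      f u (u + E i) + f (u + E i) (u + E i + E j) + f u (u + E j) + f (u + E j) (u + E j + E i) = 0 := by
    intro u i j hij
    have hcomm : u + E j + E i = u + E i + E j := by rw [add_right_comm]
    rw [hcomm]
    have a12 : G.Adj u (u + E i) := adj_step u i
    have a23 : G.Adj (u + E i) (u + E i + E j) := adj_step _ j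
    have a14 : G.Adj u (u + E j) := adj_step u j
    have a43 : G.Adj (u + E j) (u + E i + E j) := by
      rw [← hcomm]; exact adj_step _ i
    by_cases m1 : u ∈ A <;> by_cases m2 : u + E i ∈ A <;>
      by_cases m3 : u + E i + E j ∈ A <;> by_cases m4 : u + E j ∈ A
    · -- TTTT
      rw [fzero (iff_of_true m1 m2), fzero (iff_of_true m2 m3),
          fzero (iff_of_true m1 m4), fzero (iff_of_true m4 m3)]
      simp
    · -- TTTF : E3 ind v4, E4 ind v4
      rw [fzero (iff_of_true m1 m2), fzero (iff_of_true m2 m3),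
          fvalA m1 m4, fvalB m3 m4]
      simp only [z2_add_self, add_zero, zero_add]
    · -- TTFT : E2 ind v3, E4 ind v3
      rw [fzero (iff_of_true m1 m2), fvalA m2 m3,
          fzero (iff_of_true m1 m4), fvalA m4 m3]
      simp only [z2_add_self, add_zero, zero_add]
    · -- TTFF : E2 ind v3, E3 ind v4 ; v4 ~ v3 both in T
      rw [fzero (iff_of_true m1 m2), fvalA m2 m3, fvalA m1 m4,
          fzero (iff_of_false m4 m3)]
      have hv3T : u + E i + E j ∈ T := hTout a23 m2 m3
      have hv4T : u + E j ∈ T := hTout a14 m1 m4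
      have h1 := hKiff a43 hv4T hv3T
      simp only [propext h1, z2_add_self, add_zero, zero_add]
    · -- TFTT : E1 ind v2, E2 ind v2
      rw [fvalA m1 m2, fvalB m3 m2,
          fzero (iff_of_true m1 m4), fzero (iff_of_true m4 m3)]
      simp only [z2_add_self, add_zero, zero_add]
    · -- TFTF : E1 ind v2, E2 ind v2, E3 ind v4, E4 ind v4
      rw [fvalA m1 m2, fvalB m3 m2, fvalA m1 m4, fvalB m3 m4]
      simp only [z2_add_self, add_zero, zero_add]
    · -- TFFT : E1 ind v2, E4 ind v3 ; v2 ~ v3 both in T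
      rw [fvalA m1 m2, fzero (iff_of_false m2 m3),
          fzero (iff_of_true m1 m4), fvalA m4 m3]
      have hv2T : u + E i ∈ T := hTout a12 m1 m2
      have hv3T : u + E i + E j ∈ T := hTout a43 m4 m3
      have h1 := hKiff a23 hv2T hv3T
      simp only [propext h1, z2_add_self, add_zero, zero_add]
    · -- TFFF : E1 ind v2, E3 ind v4 ; v2 ~ v3 ~ v4 all in T
      rw [fvalA m1 m2, fzero (iff_of_false m2 m3),
          fvalA m1 m4, fzero (iff_of_false m4 m3)]
      have hv2T : u + E i ∈ T := hTout a12 m1 m2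
      have hv4T : u + E j ∈ T := hTout a14 m1 m4
      have hv3T : u + E i + E j ∈ T := hT2 a23.symm m2 m3 a12.symm m1
      have h1 := hKiff a23 hv2T hv3T
      have h2 := hKiff a43 hv4T hv3T
      simp only [propext h1, propext h2, z2_add_self, add_zero, zero_add]
    · -- FTTT : E1 ind v1, E3 ind v1
      rw [fvalB m2 m1, fzero (iff_of_true m2 m3),
          fvalB m4 m1, fzero (iff_of_true m4 m3)]
      simp only [z2_add_self, add_zero, zero_add]
    · -- FTTF : E1 ind v1, E4 ind v4 ; v1 ~ v4 both in T
      rw [fvalB m2 m1, fzero (iff_of_true m2 m3),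
          fzero (iff_of_false m1 m4), fvalB m3 m4]
      have hv1T : u ∈ T := hTout a12.symm m2 m1
      have hv4T : u + E j ∈ T := hTout a43.symm m3 m4
      have h1 := hKiff a14 hv1T hv4T
      simp only [propext h1, z2_add_self, add_zero, zero_add]
    · -- FTFT : E1 ind v1, E2 ind v3, E3 ind v1, E4 ind v3
      rw [fvalB m2 m1, fvalA m2 m3, fvalB m4 m1, fvalA m4 m3]
      linear_combination z2_add_self ((if u ∈ K then (1:ZMod 2) else 0) + (if u + E i + E j ∈ K then (1:ZMod 2) else 0))
    · -- FTFF : E1 ind v1, E2 ind v3 ; v1 ~ v4 ~ v3 all in T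
      rw [fvalB m2 m1, fvalA m2 m3,
          fzero (iff_of_false m1 m4), fzero (iff_of_false m4 m3)]
      have hv1T : u ∈ T := hTout a12.symm m2 m1
      have hv3T : u + E i + E j ∈ T := hTout a23 m2 m3
      have hv4T : u + E j ∈ T := hT2 a14.symm m1 m4 a12 m2
      have h1 := hKiff a14 hv1T hv4T
      have h2 := hKiff a43 hv4T hv3T
      simp only [propext h1, propext h2, z2_add_self, add_zero, zero_add]
    · -- FFTT : E2 ind v2, E3 ind v1 ; v1 ~ v2 both in T
      rw [fzero (iff_of_false m1 m2), fvalB m3 m2,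
          fvalB m4 m1, fzero (iff_of_true m4 m3)]
      have hv1T : u ∈ T := hTout a14.symm m4 m1
      have hv2T : u + E i ∈ T := hTout a23.symm m3 m2
      have h1 := hKiff a12 hv1T hv2T
      simp only [propext h1, z2_add_self, add_zero, zero_add]
    · -- FFTF : E2 ind v2, E4 ind v4 ; v2 ~ v1 ~ v4 all in T
      rw [fzero (iff_of_false m1 m2), fvalB m3 m2,
          fzero (iff_of_false m1 m4), fvalB m3 m4]
      have hv2T : u + E i ∈ T := hTout a23.symm m3 m2
      have hv4T : u + E j ∈ T := hTout a43.symm m3 m4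
      have hv1T : u ∈ T := hT2 a12 m2 m1 a23 m3
      have h1 := hKiff a12 hv1T hv2T
      have h2 := hKiff a14 hv1T hv4T
      simp only [propext h1.symm, propext h2.symm, z2_add_self, add_zero, zero_add]
    · -- FFFT : E3 ind v1, E4 ind v3 ; v1 ~ v2 ~ v3 all in T
      rw [fzero (iff_of_false m1 m2), fzero (iff_of_false m2 m3),
          fvalB m4 m1, fvalA m4 m3]
      have hv1T : u ∈ T := hTout a14.symm m4 m1
      have hv3T : u + E i + E j ∈ T := hTout a43 m4 m3
      have hv2T : u + E i ∈ T := hT2 a12.symm m1 m2 a14 m4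
      have h1 := hKiff a12 hv1T hv2T
      have h2 := hKiff a23 hv2T hv3T
      simp only [propext h1, propext h2, z2_add_self, add_zero, zero_add]
    · -- FFFF
      rw [fzero (iff_of_false m1 m2), fzero (iff_of_false m2 m3),
          fzero (iff_of_false m1 m4), fzero (iff_of_false m4 m3)]
      simp
  have hnull : ∀ x y, f x y ≠ 0 → (x ∈ A ∧ y ∉ A) ∨ (y ∈ A ∧ x ∉ A) := by
    intro x y h
    simp only [hf] at h
    by_cases hc : (x ∈ A ∧ y ∉ A ∧ y ∈ K) ∨ (y ∈ A ∧ x ∉ A ∧ x ∈ K)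
    · rcases hc with ⟨h1, h2, _⟩ | ⟨h1, h2, _⟩
      · exact Or.inl ⟨h1, h2⟩
      · exact Or.inr ⟨h1, h2⟩
    · exact absurd (if_neg hc) h
  have hf0 : f a0 b0 = 1 := by
    rw [fvalA ha0 hb0, if_pos (compIn_self hb0T)]
  have hcut : ∀ {x y : V d}, x ∈ A → y ∉ A → (latticeGraph d).Adj x y → f x y = 1 :=
    fun hx hy hadj => cut hA f hsymm hsq hnull hadj0 ha0 hb0 hf0 hx hy hadj
  have hKcross : ∀ {x y : V d}, G.Adj x y → x ∈ A → y ∉ A → y ∈ K := by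
    intro x y hadj hx hy
    have h1 := hcut hx hy hadj
    rw [fvalA hx hy] at h1
    by_cases hc : y ∈ K
    · exact hc
    · rw [if_neg hc] at h1; exact absurd h1 (by decide)
  have hall : ∀ v ∈ T, v ∈ compIn G T b0 := by
    intro v hv
    obtain ⟨hvp, hvA⟩ := hv
    rcases hvp with hvp1 | ⟨w, hwp, hadj⟩
    · rcases hvp1 with hvA' | ⟨w, hwA, hadj⟩
      · exact absurd hvA' hvA
      · exact hKcross hadj.symm hwA hvA
    · by_cases hw : w ∈ A
      · exact hKcross hadj.symm hw hvA
      · rcases hwp with hwA' | ⟨z, hzA, hadj2⟩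
        · exact absurd hwA' hw
        · have hwK : w ∈ K := hKcross hadj2.symm hzA hw
          have hwT : w ∈ T := hTout hadj2.symm hzA hw
          have hvT : v ∈ T := ⟨Or.inr ⟨w, Or.inr ⟨z, hzA, hadj2⟩, hadj⟩, hvA⟩
          exact ((hKiff hadj hvT hwT).mpr hwK)
  exact connectedIn_of_compIn hb0T hall

end Stmt7Aux
namespace Stmt7Aux
open P3C

variable {d : ℕ}

lemma vplus_compl (A : Set (V d)) : vplus d Aᶜ = (vminus d A)ᶜ := by
  ext u
  simp only [vplus, vminus, Set.mem_setOf_eq, Set.mem_compl_iff, not_and, not_forall]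
  constructor
  · rintro (h | ⟨w, hw, hadj⟩)
    · intro hu; exact absurd hu h
    · intro _; exact ⟨w, hadj, hw⟩
  · intro h
    by_cases hu : u ∈ A
    · obtain ⟨w, hadj, hw⟩ := h hu
      exact Or.inr ⟨w, hw, hadj⟩
    · exact Or.inl hu

lemma diff_eq_compl (A : Set (V d)) :
    A \ vminus d (vminus d A) = vplus d (vplus d Aᶜ) \ Aᶜ := by
  rw [vplus_compl A, vplus_compl (vminus d A)]
  ext x
  simp only [Set.mem_diff, Set.mem_compl_iff, not_not]
  tauto

lemma biConnected_compl {A : Set (V d)} (hA : BiConnected d A) : BiConnected d Aᶜ := by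
  refine ⟨?_, ?_, hA.2.2.2, ?_⟩
  · intro h
    exact hA.2.1 (by rwa [Set.compl_empty_iff] at h)
  · intro h
    exact hA.1 (by rwa [Set.compl_univ_iff] at h)
  · rw [compl_compl]
    exact hA.2.2.1

end Stmt7Aux

theorem stmt7 (d : ℕ) (A : Set (Fin d → ℤ)) (hA : P3C.BiConnected d A) :
    P3C.ConnectedIn (P3C.latticeGraph d) (P3C.inBdry d A ∪ P3C.outBdry d A) ∧
    P3C.ConnectedIn (P3C.latticeGraph d) (P3C.vplus d (P3C.vplus d A) \ A) ∧
    P3C.ConnectedIn (P3C.latticeGraph d) (A \ P3C.vminus d (P3C.vminus d A)) := by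
  refine ⟨Stmt7Aux.part1 hA, Stmt7Aux.part2 hA, ?_⟩
  rw [Stmt7Aux.diff_eq_compl A]
  exact Stmt7Aux.part2 (Stmt7Aux.biConnected_compl hA)
end

section
/- Let n ≥ 2 be an integer, let V ⊆ ℤ^d be translation respecting of type 0, let Δ be a minimal translation of V (i.e. Δ ∈ nℤ^d with V ⊊ V + Δ and no member of T_V lies strictly between V and V + Δ), and let ℓ ∈ ℤ satisfy V + ℓ·Δ = V + n·e_1. Then the number of ordered pairs (w0, w1) of vertices of (ℤ/nℤ)^d such that w0 − w1 = π(e_1) and some edge (x0, x1) ∈ ∂V satisfies π(x0) = w0, π(x1) = w1, is at least ℓ·n^{d−1}. -/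
open P3C

namespace Aux

lemma mem_tr {d : ℕ} {V : Set (Fin d → ℤ)} {z a : Fin d → ℤ} :
    a ∈ (fun u => u + z) '' V ↔ a - z ∈ V := by
  constructor
  · rintro ⟨u, hu, rfl⟩; simpa using hu
  · intro h; exact ⟨a - z, h, by simp⟩

lemma adj_tr {d : ℕ} {x x' : Fin d → ℤ} (z : Fin d → ℤ)
    (h : (latticeGraph d).Adj x x') : (latticeGraph d).Adj (x + z) (x' + z) := by
  obtain ⟨i, h1, h2⟩ := h
  refine ⟨i, ?_, fun j hj => ?_⟩
  · simp only [Pi.add_apply]; omega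
  · simp only [Pi.add_apply, h2 j hj]

lemma adj_tr_iff {d : ℕ} {x x' : Fin d → ℤ} (z : Fin d → ℤ) :
    (latticeGraph d).Adj (x + z) (x' + z) ↔ (latticeGraph d).Adj x x' := by
  constructor
  · intro h
    have := adj_tr (-z) h
    simpa using this
  · exact adj_tr z

lemma edgeBdry_tr {d : ℕ} {V : Set (Fin d → ℤ)} {z a b : Fin d → ℤ}
    (h : (a, b) ∈ edgeBdry d ((fun u => u + z) '' V)) :
    (a - z, b - z) ∈ edgeBdry d V := by
  obtain ⟨hadj, hmem⟩ := h
  refine ⟨?_, ?_⟩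
  · have : (latticeGraph d).Adj (a - z + z) (b - z + z) := by simpa using hadj
    simpa [adj_tr_iff] using (adj_tr_iff z).mp this
  · rcases hmem with ⟨h1, h2⟩ | ⟨h1, h2⟩
    · exact Or.inl ⟨mem_tr.mp h1, fun hc => h2 (mem_tr.mpr hc)⟩
    · exact Or.inr ⟨mem_tr.mp h1, fun hc => h2 (mem_tr.mpr hc)⟩

lemma lattice_induct {d : ℕ} (P : (Fin d → ℤ) → Prop)
    (hP : ∀ x x', (latticeGraph d).Adj x x' → P x → P x') :
    ∀ x y, P x → P y := by
  suffices H : ∀ (k : ℕ) (x y : Fin d → ℤ), (∑ i, (x i - y i).natAbs) = k → P x → P y by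
    intro x y hx; exact H _ x y rfl hx
  intro k
  induction k using Nat.strong_induction_on with
  | _ k ih =>
    intro x y hk hx
    rcases Nat.eq_zero_or_pos k with rfl | hpos
    · have : ∀ i, (x i - y i).natAbs = 0 := by
        intro i
        have := Finset.sum_eq_zero_iff.mp hk
        exact this i (Finset.mem_univ i)
      have : x = y := funext fun i => by have := this i; omega
      rwa [← this]
    · have hex : ∃ i, x i ≠ y i := by
        by_contra hc
        push_neg at hc
        have : (∑ i, (x i - y i).natAbs) = 0 :=
          Finset.sum_eq_zero fun i _ => by rw [hc i]; simp
        omega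
      obtain ⟨i, hi⟩ := hex
      set v : ℤ := if x i < y i then x i + 1 else x i - 1 with hv
      set x' : Fin d → ℤ := Function.update x i v with hx'
      have hadj : (latticeGraph d).Adj x x' := by
        refine ⟨i, ?_, fun j hj => Function.update_of_ne hj _ _⟩
        rw [hx', Function.update_self, hv]
        split <;> omega
      have hsum : (∑ j, (x' j - y j).natAbs) = k - 1 := by
        have h1 : ∀ j, j ≠ i → (x' j - y j).natAbs = (x j - y j).natAbs := by
          intro j hj; rw [hx', Function.update_of_ne hj]
        have h2 : (x' i - y i).natAbs = (x i - y i).natAbs - 1 := by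
          rw [hx', Function.update_self, hv]
          split <;> omega
        have e1 : (∑ j, (x' j - y j).natAbs)
            = (x' i - y i).natAbs + ∑ j ∈ Finset.univ.erase i, (x' j - y j).natAbs :=
          (Finset.add_sum_erase _ _ (Finset.mem_univ i)).symm
        have e2 : (∑ j, (x j - y j).natAbs)
            = (x i - y i).natAbs + ∑ j ∈ Finset.univ.erase i, (x j - y j).natAbs :=
          (Finset.add_sum_erase _ _ (Finset.mem_univ i)).symm
        have e3 : ∑ j ∈ Finset.univ.erase i, (x' j - y j).natAbs
            = ∑ j ∈ Finset.univ.erase i, (x j - y j).natAbs :=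
          Finset.sum_congr rfl fun j hj => h1 j (Finset.ne_of_mem_erase hj)
        have hne0 : (x i - y i).natAbs ≠ 0 := by omega
        omega
      exact ih (k - 1) (by omega) x' y hsum (hP x x' hadj hx)

end Aux

theorem stmt13 (n d : ℕ) (hn : 2 ≤ n) (hd : 0 < d)
    (V : Set (Fin d → ℤ)) (hV : P3C.TypeZero n d V)
    (Δ : Fin d → ℤ) (hΔdvd : ∀ i, (n : ℤ) ∣ Δ i)
    (hΔ1 : V ⊂ (fun u => u + Δ) '' V)
    (hΔmin : ¬ ∃ W ∈ P3C.translates n d V, V ⊂ W ∧ W ⊂ (fun u => u + Δ) '' V)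
    (ℓ : ℤ)
    (hℓ : (fun u => u + ℓ • Δ) '' V =
      (fun u => u + Pi.single (⟨0, hd⟩ : Fin d) (n : ℤ)) '' V) :
    ℓ * (n : ℤ) ^ (d - 1) ≤
      (Nat.card ↥{p : (Fin d → ZMod n) × (Fin d → ZMod n) |
        p.1 - p.2 = P3C.latticeProj n d (Pi.single (⟨0, hd⟩ : Fin d) 1) ∧
        ∃ x0 x1 : Fin d → ℤ, (x0, x1) ∈ P3C.edgeBdry d V ∧
          P3C.latticeProj n d x0 = p.1 ∧ P3C.latticeProj n d x1 = p.2} : ℤ) := by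
  classical
  haveI : NeZero n := ⟨by omega⟩
  set i0 : Fin d := ⟨0, hd⟩ with hi0
  set e : Fin d → ℤ := Pi.single i0 1 with he
  set N : Fin d → ℤ := Pi.single i0 (n : ℤ) with hN
  set S : Set ((Fin d → ZMod n) × (Fin d → ZMod n)) :=
    {p : (Fin d → ZMod n) × (Fin d → ZMod n) |
      p.1 - p.2 = P3C.latticeProj n d e ∧
      ∃ x0 x1 : Fin d → ℤ, (x0, x1) ∈ P3C.edgeBdry d V ∧
        P3C.latticeProj n d x0 = p.1 ∧ P3C.latticeProj n d x1 = p.2} with hS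
  rcases le_or_gt ℓ 0 with hl0 | hlpos
  · have h1 : (0:ℤ) ≤ (n:ℤ)^(d-1) := by positivity
    have h2 : ℓ * (n:ℤ)^(d-1) ≤ 0 := mul_nonpos_of_nonpos_of_nonneg hl0 h1
    exact h2.trans (Int.natCast_nonneg _)
  -- main case
  set W : ℤ → Set (Fin d → ℤ) := fun j => (fun u => u + j • Δ) '' V with hW
  have hWmem' : ∀ {a : Fin d → ℤ} {j : ℤ}, a ∈ W j ↔ a - j • Δ ∈ V := by
    intro a j; rw [hW]; exact Aux.mem_tr
  have hWtr : ∀ j, W j ∈ P3C.translates n d V := by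
    intro j
    refine ⟨j • Δ, fun i => ?_, rfl⟩
    simpa [Pi.smul_apply, smul_eq_mul] using (hΔdvd i).mul_left j
  have hWsucc : ∀ j, W j ⊂ W (j+1) := by
    intro j
    constructor
    · intro a ha
      have h1 : a - j • Δ ∈ V := hWmem'.mp ha
      have h2 : a - j • Δ ∈ (fun u => u + Δ) '' V := hΔ1.1 h1
      have h3 : a - j • Δ - Δ ∈ V := Aux.mem_tr.mp h2
      refine hWmem'.mpr ?_
      have hq : a - (j+1) • Δ = a - j • Δ - Δ := by
        rw [add_zsmul, one_zsmul]; abel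
      rw [hq]; exact h3
    · intro hsub
      obtain ⟨b, hb1, hb2⟩ := Set.exists_of_ssubset hΔ1
      have hb3 : b + j • Δ ∈ W (j+1) := by
        refine hWmem'.mpr ?_
        have hq : b + j • Δ - (j+1) • Δ = b - Δ := by
          rw [add_zsmul, one_zsmul]; abel
        rw [hq]; exact Aux.mem_tr.mp hb1
      have hb4 : b + j • Δ ∈ W j := hsub hb3
      have : b ∈ V := by simpa using hWmem'.mp hb4
      exact hb2 this
  have hWmono : StrictMono W := strictMono_int_of_lt_succ hWsucc
  have hWle : ∀ {j k : ℤ}, j ≤ k → W j ⊆ W k := fun h => hWmono.monotone h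
  have hWne : ∀ {j k : ℤ}, j ≠ k → W j ≠ W k := by
    intro j k h
    rcases h.lt_or_gt with h' | h'
    · exact (hWmono h').ne
    · exact (hWmono h').ne'
  have hdisj : ∀ {j k : ℤ}, j ≠ k → ∀ p, p ∈ P3C.edgeBdry d (W j) → p ∈ P3C.edgeBdry d (W k) → False := by
    intro j k hjk p h1 h2
    have hbd := hV.1.2 (W j) (hWtr j) (W k) (hWtr k) (hWne hjk)
    have h3 := hbd.1
    have h4 : p ∈ P3C.edgeBdry d (W j) ∩ P3C.edgeBdry d (W k) := ⟨h1, h2⟩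
    rw [h3] at h4
    exact h4
  have hcrossuniq : ∀ x x', (P3C.latticeGraph d).Adj x x' → ∀ j k : ℤ,
      ((x ∈ W j ∧ x' ∉ W j) ∨ (x' ∈ W j ∧ x ∉ W j)) →
      ((x ∈ W k ∧ x' ∉ W k) ∨ (x' ∈ W k ∧ x ∉ W k)) → j = k := by
    intro x x' hadj j k h1 h2
    by_contra hne
    exact hdisj hne (x, x') ⟨hadj, h1⟩ ⟨hadj, h2⟩
  have hW0 : W 0 = V := by
    ext a
    rw [hWmem']
    simp
  have hexists_mem : ∀ x, ∃ j, x ∈ W j := by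
    obtain ⟨v, hv⟩ := Set.nonempty_iff_ne_empty.mpr hV.1.1.1
    intro x
    refine Aux.lattice_induct (fun x => ∃ j, x ∈ W j) ?_ v x ⟨0, hW0.symm ▸ hv⟩
    intro a a' hadj ⟨j₀, hj⟩
    by_contra hc
    push_neg at hc
    have c1 : a ∈ W j₀ ∧ a' ∉ W j₀ := ⟨hj, hc j₀⟩
    have c2 : a ∈ W (j₀+1) ∧ a' ∉ W (j₀+1) := ⟨hWle (by omega) hj, hc (j₀+1)⟩
    have := hcrossuniq a a' hadj j₀ (j₀+1) (Or.inl c1) (Or.inl c2)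
    omega
  have hexists_not : ∀ x, ∃ j, x ∉ W j := by
    obtain ⟨q, hq⟩ := Set.ne_univ_iff_exists_notMem V |>.mp hV.1.1.2.1
    intro x
    refine Aux.lattice_induct (fun x => ∃ j, x ∉ W j) ?_ q x ⟨0, hW0.symm ▸ hq⟩
    intro a a' hadj ⟨j₀, hj⟩
    by_contra hc
    push_neg at hc
    have c1 : a' ∈ W j₀ ∧ a ∉ W j₀ := ⟨hc j₀, hj⟩
    have haj : a ∉ W (j₀ - 1) := fun h => hj (hWle (by omega) h)
    have c2 : a' ∈ W (j₀-1) ∧ a ∉ W (j₀-1) := ⟨hc (j₀-1), haj⟩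
    have := hcrossuniq a a' hadj j₀ (j₀-1) (Or.inr c1) (Or.inr c2)
    omega
  have hleast : ∀ x, ∃ j, x ∈ W j ∧ ∀ k, x ∈ W k → j ≤ k := by
    intro x
    obtain ⟨j₀, hj₀⟩ := hexists_not x
    have hbdd : ∃ b, ∀ z, x ∈ W z → b ≤ z := by
      refine ⟨j₀ + 1, fun z hz => ?_⟩
      by_contra hlt
      push_neg at hlt
      exact hj₀ (hWle (by omega) hz)
    obtain ⟨lb, h1, h2⟩ := Int.exists_least_of_bdd hbdd (hexists_mem x)
    exact ⟨lb, h1, h2⟩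
  choose H hH1 hH2 using hleast
  have hHiff : ∀ {x j}, x ∈ W j ↔ H x ≤ j := by
    intro x j
    exact ⟨hH2 x j, fun h => hWle h (hH1 x)⟩
  have hLip : ∀ x x', (P3C.latticeGraph d).Adj x x' → H x' ≤ H x + 1 := by
    intro x x' hadj
    by_contra hc
    push_neg at hc
    have c1 : x ∈ W (H x) ∧ x' ∉ W (H x) :=
      ⟨hH1 x, fun h => by have := hHiff.mp h; omega⟩
    have c2 : x ∈ W (H x + 1) ∧ x' ∉ W (H x + 1) :=
      ⟨hWle (by omega) (hH1 x), fun h => by have := hHiff.mp h; omega⟩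
    have := hcrossuniq x x' hadj (H x) (H x + 1) (Or.inl c1) (Or.inl c2)
    omega
  have hshift : ∀ (j : ℤ) (x : Fin d → ℤ), x + N ∈ W (j + ℓ) ↔ x ∈ W j := by
    intro j x
    have hℓ' : ∀ a : Fin d → ℤ, a - ℓ • Δ ∈ V ↔ a - N ∈ V := by
      intro a
      constructor
      · intro h
        have : a ∈ (fun u => u + ℓ • Δ) '' V := Aux.mem_tr.mpr h
        rw [hℓ] at this
        exact Aux.mem_tr.mp this
      · intro h
        have : a ∈ (fun u => u + N) '' V := Aux.mem_tr.mpr h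
        rw [← hℓ] at this
        exact Aux.mem_tr.mp this
    rw [hWmem', hWmem']
    have key : x + N - (j + ℓ) • Δ = (x + N - j • Δ) - ℓ • Δ := by
      rw [add_zsmul]; abel
    rw [key, hℓ' (x + N - j • Δ)]
    have key2 : x + N - j • Δ - N = x - j • Δ := by abel
    rw [key2]
  have hper : ∀ x, H (x + N) = H x + ℓ := by
    intro x
    have h1 : H (x + N) ≤ H x + ℓ := hHiff.mp ((hshift (H x) x).mpr (hH1 x))
    have h2' : x + N ∈ W (H (x + N) - ℓ + ℓ) := by
      rw [sub_add_cancel]; exact hH1 _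
    have h2 : H x ≤ H (x + N) - ℓ := hHiff.mp ((hshift _ x).mp h2')
    omega
  have hadj_e : ∀ x : Fin d → ℤ, (P3C.latticeGraph d).Adj x (x + e) := by
    intro x
    refine ⟨i0, Or.inl ?_, fun j hj => ?_⟩
    · simp [he]
    · simp [he, Pi.single_eq_of_ne hj]
  have hproj : ∀ (x : Fin d → ℤ) (j : ℤ),
      P3C.latticeProj n d (x - j • Δ) = P3C.latticeProj n d x := by
    intro x j
    funext i
    have hz : (((j • Δ) i : ℤ) : ZMod n) = 0 := by
      simp only [Pi.smul_apply, smul_eq_mul]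
      exact (ZMod.intCast_zmod_eq_zero_iff_dvd _ n).mpr ((hΔdvd i).mul_left j)
    simp only [P3C.latticeProj, Pi.sub_apply, Int.cast_sub, hz, sub_zero]
  have hmemS : ∀ x : Fin d → ℤ, H x ≠ H (x + e) →
      (P3C.latticeProj n d (x + e), P3C.latticeProj n d x) ∈ S := by
    intro x hne
    have hcross : ∃ j, (x + e, x) ∈ P3C.edgeBdry d (W j) := by
      rcases hne.lt_or_gt with hlt | hlt
      · exact ⟨H x, ⟨(hadj_e x).symm, Or.inr ⟨hH1 x, fun h => by
          have h2 := hHiff.mp (show x + e ∈ W (H x) from h); omega⟩⟩⟩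
      · exact ⟨H (x+e), ⟨(hadj_e x).symm, Or.inl ⟨hH1 _, fun h => by
          have h2 := hHiff.mp (show x ∈ W (H (x+e)) from h); omega⟩⟩⟩
    obtain ⟨j, hj⟩ := hcross
    rw [hW] at hj
    have hedge : (x + e - j • Δ, x - j • Δ) ∈ P3C.edgeBdry d V := Aux.edgeBdry_tr hj
    rw [hS]
    refine ⟨?_, x + e - j • Δ, x - j • Δ, hedge, ?_, ?_⟩
    · funext i
      simp only [P3C.latticeProj, Pi.sub_apply, Pi.add_apply, Int.cast_add]
      ring
    · rw [hproj]
    · rw [hproj]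
  have hline : ∀ t : Fin d → ZMod n, ∃ F : Finset ℕ, F.card = ℓ.toNat ∧ ∀ s ∈ F, s < n ∧
      H ((fun i => ((t i).val : ℤ)) + Pi.single i0 (s:ℤ)) ≠
      H ((fun i => ((t i).val : ℤ)) + Pi.single i0 (s:ℤ) + e) := by
    intro t
    set y : Fin d → ℤ := fun i => ((t i).val : ℤ) with hy
    set g : ℕ → ℤ := fun s => H (y + Pi.single i0 (s:ℤ)) with hg
    have hgstep : ∀ s : ℕ, y + Pi.single i0 ((s:ℤ)+1) = y + Pi.single i0 (s:ℤ) + e := by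
      intro s
      rw [he, Pi.single_add, ← add_assoc]
    have hg1 : ∀ s : ℕ, g (s+1) = H (y + Pi.single i0 (s:ℤ) + e) := by
      intro s
      have hcast : (((s+1:ℕ)):ℤ) = (s:ℤ)+1 := by push_cast; ring
      show H (y + Pi.single i0 ((s+1:ℕ):ℤ)) = _
      rw [hcast, hgstep]
    have habs : ∀ s : ℕ, |g (s+1) - g s| ≤ 1 := by
      intro s
      have h1 := hLip _ _ (hadj_e (y + Pi.single i0 (s:ℤ)))
      have h2 := hLip _ _ (hadj_e (y + Pi.single i0 (s:ℤ))).symm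
      rw [← hg1] at h1 h2
      have hgs : g s = H (y + Pi.single i0 (s:ℤ)) := rfl
      rw [abs_le]
      constructor <;> omega
    have hsum : ∑ s ∈ Finset.range n, (g (s+1) - g s) = ℓ := by
      rw [Finset.sum_range_sub]
      have h0 : g 0 = H y := by
        rw [hg]
        norm_num
      have hn' : g n = H y + ℓ := by
        show H (y + Pi.single i0 ((n:ℕ):ℤ)) = H y + ℓ
        rw [← hN]
        exact hper y
      rw [h0, hn']
      ring
    set F0 : Finset ℕ := (Finset.range n).filter (fun s => g (s+1) - g s ≠ 0) with hF0
    have hcard : ℓ ≤ (F0.card : ℤ) := by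
      have h1 : ℓ = ∑ s ∈ F0, (g (s+1) - g s) := by
        rw [hF0, Finset.sum_filter_ne_zero, hsum]
      have h2 : |∑ s ∈ F0, (g (s+1) - g s)| ≤ ∑ s ∈ F0, |g (s+1) - g s| :=
        Finset.abs_sum_le_sum_abs _ _
      have h3 : ∑ s ∈ F0, |g (s+1) - g s| ≤ F0.card • (1:ℤ) :=
        Finset.sum_le_card_nsmul _ _ _ (fun s _ => habs s)
      have h4 : (F0.card • (1:ℤ)) = (F0.card : ℤ) := by simp
      have h5 : ℓ ≤ |ℓ| := le_abs_self ℓ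
      rw [h1] at h5 ⊢
      omega
    obtain ⟨F, hFsub, hFcard⟩ := Finset.exists_subset_card_eq
      (show ℓ.toNat ≤ F0.card by omega)
    refine ⟨F, hFcard, fun s hs => ?_⟩
    have hs0 := hFsub hs
    rw [hF0, Finset.mem_filter] at hs0
    obtain ⟨hrange, hne⟩ := hs0
    refine ⟨Finset.mem_range.mp hrange, fun hc => ?_⟩
    apply hne
    have : g (s+1) = g s := by
      rw [hg1 s, ← hc]
    omega
  choose Ft hFtcard hFtmem using hline
  have hmain : ∀ (t : Fin d → ZMod n) (s : ℕ), s ∈ Ft t →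
      (P3C.latticeProj n d ((fun i => ((t i).val : ℤ)) + Pi.single i0 (s:ℤ) + e),
       P3C.latticeProj n d ((fun i => ((t i).val : ℤ)) + Pi.single i0 (s:ℤ))) ∈ S :=
    fun t s hs => hmemS _ (hFtmem t s hs).2
  have hsecond : ∀ (t t' : Fin d → ZMod n) (s s' : ℕ), s < n → s' < n →
      t i0 = 0 → t' i0 = 0 →
      P3C.latticeProj n d ((fun i => ((t i).val : ℤ)) + Pi.single i0 (s:ℤ)) =
        P3C.latticeProj n d ((fun i => ((t' i).val : ℤ)) + Pi.single i0 (s':ℤ)) →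
      t = t' ∧ s = s' := by
    intro t t' s s' hsn hs'n ht ht' hEq
    have hco : ∀ i, ((((t i).val : ℤ) + (Pi.single i0 ((s:ℕ):ℤ) : Fin d → ℤ) i : ℤ) : ZMod n)
        = ((((t' i).val : ℤ) + (Pi.single i0 ((s':ℕ):ℤ) : Fin d → ℤ) i : ℤ) : ZMod n) := by
      intro i
      have h := congrFun hEq i
      simpa only [P3C.latticeProj, Pi.add_apply] using h
    have hss : s = s' := by
      have h0 := hco i0
      rw [ht, ht'] at h0
      simp only [ZMod.val_zero, Nat.cast_zero, Pi.single_eq_same, zero_add, Int.cast_natCast] at h0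
      rw [← ZMod.val_cast_of_lt hsn, ← ZMod.val_cast_of_lt hs'n, h0]
    refine ⟨funext fun i => ?_, hss⟩
    by_cases hii : i = i0
    · rw [hii, ht, ht']
    · have h0 := hco i
      rw [Pi.single_eq_of_ne hii, Pi.single_eq_of_ne hii] at h0
      simp only [add_zero, Int.cast_natCast] at h0
      rw [← ZMod.natCast_rightInverse (t i), ← ZMod.natCast_rightInverse (t' i), h0]
  have hkey : Nat.card ({t : Fin d → ZMod n // t i0 = 0} × Fin ℓ.toNat) ≤ Nat.card ↥S := by
    refine Nat.card_le_card_of_injective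
      (fun tk =>
        (⟨(P3C.latticeProj n d ((fun i => ((tk.1.1 i).val : ℤ)) +
              Pi.single i0 (((((Ft tk.1.1).orderIsoOfFin (hFtcard tk.1.1)) tk.2 : ℕ)):ℤ) + e),
           P3C.latticeProj n d ((fun i => ((tk.1.1 i).val : ℤ)) +
              Pi.single i0 (((((Ft tk.1.1).orderIsoOfFin (hFtcard tk.1.1)) tk.2 : ℕ)):ℤ))),
          hmain tk.1.1 _ (((Ft tk.1.1).orderIsoOfFin (hFtcard tk.1.1)) tk.2).2⟩ : ↥S)) ?_
    rintro ⟨t, k⟩ ⟨t', k'⟩ hEq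
    rw [Subtype.ext_iff, Prod.ext_iff] at hEq
    obtain ⟨-, h2⟩ := hEq
    set s : ℕ := (((Ft t.1).orderIsoOfFin (hFtcard t.1)) k : ℕ) with hs_def
    set s' : ℕ := (((Ft t'.1).orderIsoOfFin (hFtcard t'.1)) k' : ℕ) with hs'_def
    have hsmem : s ∈ Ft t.1 := (((Ft t.1).orderIsoOfFin (hFtcard t.1)) k).2
    have hs'mem : s' ∈ Ft t'.1 := (((Ft t'.1).orderIsoOfFin (hFtcard t'.1)) k').2
    have hres := hsecond t.1 t'.1 s s' (hFtmem t.1 s hsmem).1 (hFtmem t'.1 s' hs'mem).1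
      t.2 t'.2 h2
    obtain ⟨htt, hss⟩ := hres
    have htt' : t = t' := Subtype.ext htt
    subst htt'
    have hkk : k = k' := by
      have : (((Ft t.1).orderIsoOfFin (hFtcard t.1)) k) =
          (((Ft t.1).orderIsoOfFin (hFtcard t.1)) k') := Subtype.ext hss
      exact ((Ft t.1).orderIsoOfFin (hFtcard t.1)).toEquiv.injective this
    rw [hkk]
  have hTcard : Nat.card {t : Fin d → ZMod n // t i0 = 0} = n ^ (d - 1) := by
    have eqv : {t : Fin d → ZMod n // t i0 = 0} ≃ ({i : Fin d // i ≠ i0} → ZMod n) :=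
      { toFun := fun t i => t.1 i.1
        invFun := fun g => ⟨fun i => if h : i = i0 then 0 else g ⟨i, h⟩, by simp⟩
        left_inv := by
          rintro ⟨t, ht⟩
          ext i
          by_cases h : i = i0
          · subst h; simpa using ht.symm
          · simp [h]
        right_inv := by
          intro g
          funext i
          simp [i.2] }
    rw [Nat.card_congr eqv, Nat.card_eq_fintype_card, Fintype.card_fun, ZMod.card]
    congr 1
    have h1 : Fintype.card {i : Fin d // ¬ i = i0} = d - 1 := by
      rw [Fintype.card_subtype_compl, Fintype.card_subtype_eq, Fintype.card_fin]
    exact h1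
  rw [Nat.card_prod, hTcard, Nat.card_eq_fintype_card, Fintype.card_fin] at hkey
  have hc1 : ((n : ℤ))^(d-1) * ℓ.toNat ≤ (Nat.card ↥S : ℤ) := by exact_mod_cast hkey
  have hc2 : ℓ * (n:ℤ)^(d-1) ≤ (n:ℤ)^(d-1) * ℓ.toNat := by
    rw [mul_comm]
    exact mul_le_mul_of_nonneg_left (Int.self_le_toNat ℓ) (by positivity)
  exact hc2.trans hc1
end

section
/- If U ⊂ ℤ^d is a bi-connected set of vertices, then the internal vertex boundary ∂_in U is a connected set in the graph G_U. -/
namespace P3Caux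
open P3C

variable {d : ℕ}


def IsStep (d : ℕ) (s : Fin d → ℤ) : Prop :=
  ∃ i : Fin d, s = Pi.single i 1 ∨ s = -Pi.single i 1

lemma adj_add_step (u : Fin d → ℤ) {s : Fin d → ℤ} (hs : IsStep d s) :
    (latticeGraph d).Adj u (u + s) := by
  obtain ⟨i, h | h⟩ := hs
  · subst h
    exact ⟨i, Or.inl (by simp), fun j hj => by simp [Pi.single_eq_of_ne hj]⟩
  · subst h
    refine ⟨i, Or.inr ?_, fun j hj => by simp [Pi.single_eq_of_ne hj]⟩
    simp only [Pi.add_apply, Pi.neg_apply, Pi.single_eq_same]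
    omega

lemma adj_step {u v : Fin d → ℤ} (h : (latticeGraph d).Adj u v) : IsStep d (v - u) := by
  obtain ⟨i, h1, h2⟩ := h
  refine ⟨i, ?_⟩
  rcases h1 with h1 | h1
  · left; funext j
    by_cases hj : j = i
    · subst hj; simp only [Pi.sub_apply, Pi.single_eq_same, h1]; ring
    · simp [Pi.single_eq_of_ne hj, h2 j hj]
  · right; funext j
    by_cases hj : j = i
    · subst hj; simp only [Pi.sub_apply, Pi.neg_apply, Pi.single_eq_same, h1]; ring
    · simp [Pi.single_eq_of_ne hj, h2 j hj]

lemma add_step_eq {u v : Fin d → ℤ} : u + (v - u) = v := by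
  ring

lemma list_sum_apply (i : Fin d) : ∀ (L : List (Fin d → ℤ)), L.sum i = (L.map (fun x => x i)).sum
  | [] => rfl
  | x :: L => by simp [list_sum_apply i L]

lemma exists_neg_of_sum_neg : ∀ (L : List ℤ), L.sum < 0 → ∃ x ∈ L, x < 0
  | [], h => by simp at h
  | a :: L, h => by
      simp only [List.sum_cons] at h
      by_cases ha : a < 0
      · exact ⟨a, by simp, ha⟩
      · obtain ⟨x, hx, hx'⟩ := exists_neg_of_sum_neg L (by omega)
        exact ⟨x, by simp [hx], hx'⟩

lemma exists_pos_of_sum_pos : ∀ (L : List ℤ), 0 < L.sum → ∃ x ∈ L, 0 < x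
  | [], h => by simp at h
  | a :: L, h => by
      simp only [List.sum_cons] at h
      by_cases ha : 0 < a
      · exact ⟨a, by simp, ha⟩
      · obtain ⟨x, hx, hx'⟩ := exists_pos_of_sum_pos L (by omega)
        exact ⟨x, by simp [hx], hx'⟩

lemma step_apply_cases {y : Fin d → ℤ} (h : IsStep d y) (i : Fin d) :
    y i = 0 ∨ (y i = 1 ∧ y = Pi.single i 1) ∨ (y i = -1 ∧ y = -Pi.single i 1) := by
  obtain ⟨j, hj | hj⟩ := h <;> subst hj <;> rcases eq_or_ne i j with rfl | hne
  · exact Or.inr (Or.inl ⟨Pi.single_eq_same i 1, rfl⟩)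
  · exact Or.inl (Pi.single_eq_of_ne hne 1)
  · refine Or.inr (Or.inr ⟨?_, rfl⟩)
    simp
  · simp [Pi.single_eq_of_ne hne]

lemma step_neg_mem (s : Fin d → ℤ) (L : List (Fin d → ℤ)) (hs : IsStep d s)
    (hL : ∀ x ∈ L, IsStep d x) (hsum : s + L.sum = 0) : -s ∈ L := by
  obtain ⟨i, hcase⟩ := hs
  have hsi : s i + L.sum i = 0 := by
    have := congrFun hsum i; simpa using this
  rcases hcase with h | h
  · have hs1 : s i = 1 := by rw [h]; simp
    have hneg : (L.map (fun x => x i)).sum < 0 := by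
      rw [← list_sum_apply]; omega
    obtain ⟨z, hz, hz'⟩ := exists_neg_of_sum_neg _ hneg
    obtain ⟨y, hy, rfl⟩ := List.mem_map.1 hz
    have hzy : y i < 0 := hz'
    clear hz hz' hneg
    rcases step_apply_cases (hL y hy) i with h0 | ⟨h1, _⟩ | ⟨_, h2⟩
    · exfalso; omega
    · exfalso; omega
    · rw [h]; rwa [← h2]
  · have hs1 : s i = -1 := by rw [h]; simp
    have hpos : 0 < (L.map (fun x => x i)).sum := by
      rw [← list_sum_apply]; omega
    obtain ⟨z, hz, hz'⟩ := exists_pos_of_sum_pos _ hpos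
    obtain ⟨y, hy, rfl⟩ := List.mem_map.1 hz
    have hzy : 0 < y i := hz'
    clear hz hz' hpos
    rcases step_apply_cases (hL y hy) i with h0 | ⟨_, h1⟩ | ⟨h2, _⟩
    · exfalso; omega
    · rw [h, neg_neg]; rwa [← h1]
    · exfalso; omega



variable {G : Type*} [AddCommGroup G]

def walkSum (φ : G → G → ZMod 2) : G → List G → ZMod 2
  | _, [] => 0
  | v, s :: L => φ v (v + s) + walkSum φ (v + s) L

lemma two_eq_zero (x : ZMod 2) : x + x = 0 := by fin_cases x <;> decide

lemma walkSum_append (φ : G → G → ZMod 2) (v : G) (L M : List G) :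
    walkSum φ v (L ++ M) = walkSum φ v L + walkSum φ (v + L.sum) M := by
  induction L generalizing v with
  | nil => simp [walkSum]
  | cons s L ih =>
      simp only [List.cons_append, walkSum, List.sum_cons, List.append_eq, ih (v + s),
        ← add_assoc]

section parity

variable (Step : G → Prop) (φ : G → G → ZMod 2)
variable (hsymm : ∀ u v, φ u v = φ v u)
variable (hcyc : ∀ v s t, Step s → Step t → s ≠ t → s ≠ -t →
    φ v (v + s) + φ (v + s) (v + s + t) + φ (v + s + t) (v + t) + φ (v + t) v = 0)

include hsymm hcyc in
lemma walkSum_swap (v : G) (a b : G) (ha : Step a) (hb : Step b) (R : List G) :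
    walkSum φ v (a :: b :: R) = walkSum φ v (b :: a :: R) := by
  have hvab : v + a + b = v + b + a := by abel
  simp only [walkSum]
  rcases eq_or_ne a b with rfl | hab
  · rfl
  rcases eq_or_ne a (-b) with rfl | hab'
  · have h2 : v + b + -b = v := by abel
    have h1 : v + -b + b = v := by abel
    rw [h1, h2, hsymm (v + -b) v, hsymm v (v + b), ← add_assoc, ← add_assoc,
      two_eq_zero, two_eq_zero]
  · have h := hcyc v a b ha hb hab hab'
    rw [hvab] at h ⊢
    have e1 : φ (v + b + a) (v + b) = φ (v + b) (v + b + a) := hsymm _ _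
    have e2 : φ (v + b) v = φ v (v + b) := hsymm _ _
    rw [e1, e2] at h
    linear_combination h - two_eq_zero (φ (v + b) (v + b + a)) - two_eq_zero (φ v (v + b))

include hsymm hcyc in
lemma walkSum_bubble (x : G) (hx : Step x) (M : List G) (hM : ∀ y ∈ M, Step y)
    (N : List G) (v : G) :
    walkSum φ v (M ++ x :: N) = walkSum φ v (x :: (M ++ N)) := by
  induction M generalizing v with
  | nil => rfl
  | cons a M ih =>
      have ha : Step a := hM a (by simp)
      have hM' : ∀ y ∈ M, Step y := fun y hy => hM y (by simp [hy])
      calc walkSum φ v (a :: (M ++ x :: N))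
          = φ v (v + a) + walkSum φ (v + a) (M ++ x :: N) := rfl
        _ = φ v (v + a) + walkSum φ (v + a) (x :: (M ++ N)) := by rw [ih hM']
        _ = walkSum φ v (a :: x :: (M ++ N)) := rfl
        _ = walkSum φ v (x :: a :: (M ++ N)) := walkSum_swap Step φ hsymm hcyc v a x ha hx _

variable (hneg : ∀ (s : G) (L : List G), Step s → (∀ x ∈ L, Step x) → s + L.sum = 0 → -s ∈ L)

include hsymm hcyc hneg in
lemma walkSum_closed : ∀ (n : ℕ) (L : List G), L.length = n → (∀ x ∈ L, Step x) →
    L.sum = 0 → ∀ v : G, walkSum φ v L = 0 := by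
  intro n
  induction n using Nat.strong_induction_on with
  | _ n ih =>
    intro L hlen hL hsum v
    match L, hlen with
    | [], _ => rfl
    | s :: L', hlen =>
      have hs : Step s := hL s (by simp)
      have hL' : ∀ x ∈ L', Step x := fun x hx => hL x (by simp [hx])
      have hsum' : s + L'.sum = 0 := by simpa using hsum
      have hmem : -s ∈ L' := hneg s L' hs hL' hsum'
      have hstepneg : Step (-s) := hL' _ hmem
      obtain ⟨M, N, rfl⟩ := List.append_of_mem hmem
      have hM : ∀ y ∈ M, Step y := fun y hy => hL' y (by simp [hy])
      have hN : ∀ y ∈ N, Step y := fun y hy => hL' y (by simp [hy])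
      have hb := walkSum_bubble Step φ hsymm hcyc (-s) hstepneg M hM N (v + s)
      have hvs : v + s + -s = v := by abel
      have hsumMN : (M ++ N).sum = 0 := by
        have h0 := hsum'
        simp only [List.sum_append, List.sum_cons] at h0
        have h1 : s + (M.sum + (-s + N.sum)) = M.sum + N.sum := by abel
        rw [h1] at h0
        simpa using h0
      have hrec : walkSum φ v (M ++ N) = 0 := by
        refine ih (M ++ N).length ?_ (M ++ N) rfl (by
          intro y hy; rcases List.mem_append.1 hy with h | h
          exacts [hM y h, hN y h]) hsumMN v
        simp only [List.length_cons, List.length_append] at hlen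
        simp only [List.length_append]
        omega
      calc walkSum φ v (s :: (M ++ -s :: N))
          = φ v (v + s) + walkSum φ (v + s) (M ++ -s :: N) := rfl
        _ = φ v (v + s) + walkSum φ (v + s) (-s :: (M ++ N)) := by rw [hb]
        _ = φ v (v + s) + (φ (v + s) (v + s + -s) + walkSum φ (v + s + -s) (M ++ N)) := rfl
        _ = 0 := by
            rw [hvs, hrec, add_zero, hsymm (v + s) v, two_eq_zero]

end parity

section main
open SimpleGraph

variable {d : ℕ} {U : Set (Fin d → ℤ)}

lemma mem_inBdry {u : Fin d → ℤ} :
    u ∈ inBdry d U ↔ u ∈ U ∧ ∃ w, (latticeGraph d).Adj u w ∧ w ∉ U := by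
  simp only [inBdry, vminus, Set.mem_diff, Set.mem_setOf_eq]
  constructor
  · rintro ⟨h1, h2⟩
    refine ⟨h1, ?_⟩
    by_contra hcon
    push_neg at hcon
    exact h2 ⟨h1, hcon⟩
  · rintro ⟨h1, w, hw, hwU⟩
    exact ⟨h1, fun hh => hwU (hh.2 w hw)⟩

lemma exists_bdry (hne : U.Nonempty) (hco : Uᶜ.Nonempty) :
    ∃ a b, a ∈ U ∧ b ∉ U ∧ (latticeGraph d).Adj a b := by
  obtain ⟨x, hx⟩ := hco
  obtain ⟨u, hu⟩ := hne
  have key : ∀ (n : ℕ) (u : Fin d → ℤ), u ∈ U → (∑ i, (x i - u i).natAbs) = n →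
      ∃ a b, a ∈ U ∧ b ∉ U ∧ (latticeGraph d).Adj a b := by
    intro n
    induction n using Nat.strong_induction_on with
    | _ n ih =>
      intro u hu hn
      rcases eq_or_ne u x with rfl | hux
      · exact absurd hu hx
      have hex : ∃ i, u i ≠ x i := by
        by_contra hcon; push_neg at hcon; exact hux (funext hcon)
      obtain ⟨i, hi⟩ := hex
      set s : Fin d → ℤ := if u i < x i then Pi.single i 1 else -Pi.single i 1 with hs
      have hstep : IsStep d s := by
        rw [hs]; split_ifs; exacts [⟨i, Or.inl rfl⟩, ⟨i, Or.inr rfl⟩]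
      have hadj : (latticeGraph d).Adj u (u + s) := adj_add_step u hstep
      by_cases hmem : u + s ∈ U
      · have hsj : ∀ j, j ≠ i → s j = 0 := by
          intro j hj; rw [hs]; split_ifs <;> simp [Pi.single_eq_of_ne hj]
        have hsival : s i = if u i < x i then 1 else -1 := by
          rw [hs]; split_ifs <;> simp
        have hsi' : (x i - (u i + s i)).natAbs + 1 = (x i - u i).natAbs := by
          rw [hsival]; split_ifs with hlt <;> omega
        have hlt : (∑ j, (x j - (u + s) j).natAbs) < n := by
          rw [← Finset.sum_erase_add _ _ (Finset.mem_univ i)] at hn ⊢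
          have e1 : ∀ j ∈ Finset.univ.erase i,
              (x j - (u + s) j).natAbs = (x j - u j).natAbs := by
            intro j hj
            have h0 : s j = 0 := hsj j (Finset.ne_of_mem_erase hj)
            simp [Pi.add_apply, h0]
          rw [Finset.sum_congr rfl e1]
          have e2 : (x i - (u + s) i).natAbs + 1 = (x i - u i).natAbs := hsi'
          omega
        exact ih _ hlt (u + s) hmem rfl
      · exact ⟨u, u + s, hu, hmem, hadj⟩
  exact key _ u hu rfl

open Classical in
noncomputable def phi (U S : Set (Fin d → ℤ)) (x y : Fin d → ℤ) : ZMod 2 :=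
  if (x ∈ U ∧ y ∉ U ∧ x ∈ S) ∨ (y ∈ U ∧ x ∉ U ∧ y ∈ S) then 1 else 0

lemma phi_symm (U S : Set (Fin d → ℤ)) (x y : Fin d → ℤ) : phi U S x y = phi U S y x := by
  unfold phi
  classical
  exact if_congr (by tauto) rfl rfl

lemma phi_in_in {S : Set (Fin d → ℤ)} {x y : Fin d → ℤ} (hx : x ∈ U) (hy : y ∈ U) :
    phi U S x y = 0 := by
  unfold phi; split_ifs with hcon
  · exact absurd hcon (by tauto)
  · rfl

lemma phi_out_out {S : Set (Fin d → ℤ)} {x y : Fin d → ℤ} (hx : x ∉ U) (hy : y ∉ U) :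
    phi U S x y = 0 := by
  unfold phi; split_ifs with hcon
  · exact absurd hcon (by tauto)
  · rfl

lemma phi_congr {S : Set (Fin d → ℤ)} {x y x' y' : Fin d → ℤ} (hx : x ∈ U) (hy : y ∉ U)
    (hx' : x' ∈ U) (hy' : y' ∉ U) (h : x ∈ S ↔ x' ∈ S) : phi U S x y = phi U S x' y' := by
  unfold phi
  classical
  exact if_congr (by tauto) rfl rfl

lemma phi_eq_one {S : Set (Fin d → ℤ)} {x y : Fin d → ℤ} (hx : x ∈ U) (hy : y ∉ U)
    (hs : x ∈ S) : phi U S x y = 1 := by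
  unfold phi; split_ifs with hcon
  · rfl
  · exact absurd (Or.inl ⟨hx, hy, hs⟩) hcon

lemma phi_mem_S {S : Set (Fin d → ℤ)} {x y : Fin d → ℤ} (hy : y ∉ U)
    (h : phi U S x y = 1) : x ∈ S := by
  unfold phi at h
  split_ifs at h with hcon
  · rcases hcon with ⟨_, _, h3⟩ | ⟨hyU, _, _⟩
    · exact h3
    · exact absurd hyU hy
  · exact absurd h (by decide)

lemma walk_steps (φ : (Fin d → ℤ) → (Fin d → ℤ) → ZMod 2) {W : Set (Fin d → ℤ)}
    (hφ : ∀ a b : Fin d → ℤ, a ∈ W → b ∈ W → φ a b = 0) :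
    ∀ {x y : W} (_ : ((latticeGraph d).induce W).Walk x y),
      ∃ L, (∀ s ∈ L, IsStep d s) ∧ (x : Fin d → ℤ) + L.sum = y ∧ walkSum φ x L = 0 := by
  intro x y p
  induction p with
  | nil => exact ⟨[], by simp, by simp, rfl⟩
  | @cons a b c h p ih =>
      obtain ⟨L, hL, hsum, hws⟩ := ih
      have hadj : (latticeGraph d).Adj a b := h
      refine ⟨((b : Fin d → ℤ) - a) :: L, ?_, ?_, ?_⟩
      · intro s hs
        rcases List.mem_cons.1 hs with rfl | hs
        exacts [adj_step hadj, hL s hs]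
      · simp only [List.sum_cons]
        rw [← add_assoc, show (a : Fin d → ℤ) + ((b : Fin d → ℤ) - a) = b from by ring]
        exact hsum
      · simp only [walkSum]
        rw [show (a : Fin d → ℤ) + ((b : Fin d → ℤ) - a) = b from by ring,
          hφ a b a.2 b.2, hws, add_zero]

lemma key (hU : BiConnected d U) {u₀ v₀ : Fin d → ℤ}
    (h₀ : u₀ ∈ inBdry d U) (hv₀ : v₀ ∈ inBdry d U) :
    ((bdryGraph d U).induce (inBdry d U)).Reachable ⟨u₀, h₀⟩ ⟨v₀, hv₀⟩ := by
  obtain ⟨hne, hnuniv, hconnU, hconnUc⟩ := hU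
  set S : Set (Fin d → ℤ) :=
    {v | ∃ hv : v ∈ inBdry d U,
      ((bdryGraph d U).induce (inBdry d U)).Reachable ⟨u₀, h₀⟩ ⟨v, hv⟩} with hSdef
  have hS0 : u₀ ∈ S := ⟨h₀, Reachable.refl _⟩
  have hSclosed : ∀ x y, x ∈ S → y ∈ inBdry d U → (bdryGraph d U).Adj x y → y ∈ S := by
    rintro x y ⟨hx, hr⟩ hy hadj
    exact ⟨hy, hr.trans (SimpleGraph.Adj.reachable (by exact hadj))⟩
  have sameS : ∀ {x w y w' : Fin d → ℤ}, x ∈ U → w ∉ U → y ∈ U → w' ∉ U →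
      (latticeGraph d).Adj x w → (latticeGraph d).Adj y w' →
      ∀ {A B C E : Fin d → ℤ}, IsFourCycle d A B C E → cycleEdge d A B C E (x, w) →
      cycleEdge d A B C E (y, w') → (x ∈ S ↔ y ∈ S) := by
    intro x w y w' hx hw hy hw' haxw hayw' A B C E hfc c1 c2
    have hxB : x ∈ inBdry d U := mem_inBdry.2 ⟨hx, w, haxw, hw⟩
    have hyB : y ∈ inBdry d U := mem_inBdry.2 ⟨hy, w', hayw', hw'⟩
    rcases eq_or_ne x y with rfl | hxy
    · exact Iff.rfl
    have hadj : (bdryGraph d U).Adj x y :=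
      ⟨hxy, (x, w), (y, w'), ⟨haxw, Or.inl ⟨hx, hw⟩⟩, ⟨hayw', Or.inl ⟨hy, hw'⟩⟩,
        Or.inl rfl, Or.inl rfl, A, B, C, E, hfc, c1, c2⟩
    exact ⟨fun h => hSclosed x y h hyB hadj, fun h => hSclosed y x h hxB hadj.symm⟩
  have hcyc' : ∀ v s t : Fin d → ℤ, IsStep d s → IsStep d t → s ≠ t → s ≠ -t →
      phi U S v (v + s) + phi U S (v + s) (v + s + t) + phi U S (v + s + t) (v + t)
        + phi U S (v + t) v = 0 := by
    intro v s t hs ht hst hst'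
    have hab : (latticeGraph d).Adj v (v + s) := adj_add_step v hs
    have hbc : (latticeGraph d).Adj (v + s) (v + s + t) := adj_add_step _ ht
    have hce : (latticeGraph d).Adj (v + s + t) (v + t) := by
      have h2 := adj_add_step (v + t) hs
      rw [show v + t + s = v + s + t from by ring] at h2
      exact h2.symm
    have hea : (latticeGraph d).Adj (v + t) v := (adj_add_step v ht).symm
    have hac : v ≠ v + s + t := by
      intro hh
      apply hst'
      have h3 : v + (s + t) = v + 0 := by rw [add_zero, ← add_assoc]; exact hh.symm
      have h4 : s + t = 0 := add_left_cancel h3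
      exact eq_neg_of_add_eq_zero_left h4
    have hbe : v + s ≠ v + t := fun hh => hst (add_left_cancel hh)
    have hfc : IsFourCycle d v (v + s) (v + s + t) (v + t) := ⟨hab, hbc, hce, hea, hac, hbe⟩
    have ce1 : cycleEdge d v (v+s) (v+s+t) (v+t) (v, v+s) := Or.inl rfl
    have ce1' : cycleEdge d v (v+s) (v+s+t) (v+t) (v+s, v) := Or.inl (Set.pair_comm _ _)
    have ce2 : cycleEdge d v (v+s) (v+s+t) (v+t) (v+s, v+s+t) := Or.inr (Or.inl rfl)
    have ce2' : cycleEdge d v (v+s) (v+s+t) (v+t) (v+s+t, v+s) :=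
      Or.inr (Or.inl (Set.pair_comm _ _))
    have ce3 : cycleEdge d v (v+s) (v+s+t) (v+t) (v+s+t, v+t) := Or.inr (Or.inr (Or.inl rfl))
    have ce3' : cycleEdge d v (v+s) (v+s+t) (v+t) (v+t, v+s+t) :=
      Or.inr (Or.inr (Or.inl (Set.pair_comm _ _)))
    have ce4 : cycleEdge d v (v+s) (v+s+t) (v+t) (v+t, v) := Or.inr (Or.inr (Or.inr rfl))
    have ce4' : cycleEdge d v (v+s) (v+s+t) (v+t) (v, v+t) :=
      Or.inr (Or.inr (Or.inr (Set.pair_comm _ _)))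
    by_cases ha : v ∈ U <;> by_cases hb : v + s ∈ U <;> by_cases hc : v + s + t ∈ U <;>
      by_cases he : v + t ∈ U
    · rw [phi_in_in ha hb, phi_in_in hb hc, phi_in_in hc he, phi_in_in he ha]; simp
    · rw [phi_in_in ha hb, phi_in_in hb hc, phi_symm U S (v+t) v,
        phi_congr ha he hc he (sameS ha he hc he hea.symm hce hfc ce4' ce3)]
      linear_combination two_eq_zero (phi U S (v+s+t) (v+t))
    · rw [phi_in_in ha hb, phi_in_in he ha, phi_symm U S (v+s+t) (v+t),
        phi_congr he hc hb hc (sameS he hc hb hc hce.symm hbc hfc ce3' ce2)]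
      linear_combination two_eq_zero (phi U S (v+s) (v+s+t))
    · rw [phi_in_in ha hb, phi_out_out hc he, phi_symm U S (v+t) v,
        phi_congr ha he hb hc (sameS ha he hb hc hea.symm hbc hfc ce4' ce2)]
      linear_combination two_eq_zero (phi U S (v+s) (v+s+t))
    · rw [phi_in_in hc he, phi_in_in he ha, phi_symm U S (v+s) (v+s+t),
        phi_congr hc hb ha hb (sameS hc hb ha hb hbc.symm hab hfc ce2' ce1)]
      linear_combination two_eq_zero (phi U S v (v+s))
    · rw [phi_symm U S (v+s) (v+s+t), phi_congr hc hb hc he Iff.rfl,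
        phi_symm U S (v+t) v, phi_congr ha he ha hb Iff.rfl]
      linear_combination two_eq_zero (phi U S v (v+s)) + two_eq_zero (phi U S (v+s+t) (v+t))
    · rw [phi_out_out hb hc, phi_in_in he ha, phi_symm U S (v+s+t) (v+t),
        phi_congr he hc ha hb (sameS he hc ha hb hce.symm hab hfc ce3' ce1)]
      linear_combination two_eq_zero (phi U S v (v+s))
    · rw [phi_out_out hb hc, phi_out_out hc he, phi_symm U S (v+t) v,
        phi_congr ha he ha hb Iff.rfl]
      linear_combination two_eq_zero (phi U S v (v+s))
    · rw [phi_in_in hb hc, phi_in_in hc he, phi_symm U S v (v+s),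
        phi_congr hb ha he ha (sameS hb ha he ha hab.symm hea hfc ce1' ce4)]
      linear_combination two_eq_zero (phi U S (v+t) v)
    · rw [phi_in_in hb hc, phi_out_out he ha, phi_symm U S v (v+s),
        phi_congr hb ha hc he (sameS hb ha hc he hab.symm hce hfc ce1' ce3)]
      linear_combination two_eq_zero (phi U S (v+s+t) (v+t))
    · rw [phi_symm U S v (v+s), phi_congr hb ha hb hc Iff.rfl,
        phi_symm U S (v+s+t) (v+t), phi_congr he hc he ha Iff.rfl]
      linear_combination two_eq_zero (phi U S (v+s) (v+s+t)) + two_eq_zero (phi U S (v+t) v)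
    · rw [phi_out_out hc he, phi_out_out he ha, phi_symm U S v (v+s),
        phi_congr hb ha hb hc Iff.rfl]
      linear_combination two_eq_zero (phi U S (v+s) (v+s+t))
    · rw [phi_out_out ha hb, phi_in_in hc he, phi_symm U S (v+s) (v+s+t),
        phi_congr hc hb he ha (sameS hc hb he ha hbc.symm hea hfc ce2' ce4)]
      linear_combination two_eq_zero (phi U S (v+t) v)
    · rw [phi_out_out ha hb, phi_out_out he ha, phi_symm U S (v+s) (v+s+t),
        phi_congr hc hb hc he Iff.rfl]
      linear_combination two_eq_zero (phi U S (v+s+t) (v+t))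
    · rw [phi_out_out ha hb, phi_out_out hb hc, phi_symm U S (v+s+t) (v+t),
        phi_congr he hc he ha Iff.rfl]
      linear_combination two_eq_zero (phi U S (v+t) v)
    · rw [phi_out_out ha hb, phi_out_out hb hc, phi_out_out hc he, phi_out_out he ha]; simp
  obtain ⟨hu₀U, w₀, hadj₀, hw₀⟩ := mem_inBdry.1 h₀
  obtain ⟨hv₀U, w, hadjw, hw⟩ := mem_inBdry.1 hv₀
  have hr1 : ((latticeGraph d).induce U).Reachable ⟨u₀, hu₀U⟩ ⟨v₀, hv₀U⟩ :=
    hconnU.preconnected _ _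
  have hr2 : ((latticeGraph d).induce Uᶜ).Reachable ⟨w, hw⟩ ⟨w₀, hw₀⟩ :=
    hconnUc.preconnected _ _
  obtain ⟨p1⟩ := hr1
  obtain ⟨L₁, hL₁, hsum₁, hws₁⟩ :=
    walk_steps (phi U S) (fun a b haa hbb => phi_in_in haa hbb) p1
  obtain ⟨p2⟩ := hr2
  obtain ⟨L₂, hL₂, hsum₂, hws₂⟩ :=
    walk_steps (phi U S) (fun a b haa hbb => phi_out_out haa hbb) p2
  simp only at hsum₁ hws₁ hsum₂ hws₂
  set L : List (Fin d → ℤ) := L₁ ++ (w - v₀) :: (L₂ ++ [u₀ - w₀]) with hLdef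
  have hLsteps : ∀ s ∈ L, IsStep d s := by
    intro s hs
    rw [hLdef] at hs
    simp only [List.mem_append, List.mem_cons, List.not_mem_nil, or_false] at hs
    rcases hs with h | h | h | h
    · exact hL₁ s h
    · subst h; exact adj_step hadjw
    · exact hL₂ s h
    · subst h; exact adj_step hadj₀.symm
  have hLsum : L.sum = 0 := by
    rw [hLdef]
    simp only [List.sum_append, List.sum_cons, List.sum_nil]
    linear_combination hsum₁ + hsum₂
  have hclosed := walkSum_closed (IsStep d) (phi U S) (phi_symm U S) hcyc'
    (fun s Ls hss hLs hsum => step_neg_mem s Ls hss hLs hsum) L.length L rfl hLsteps hLsum u₀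
  have hexp : walkSum (phi U S) u₀ L = phi U S v₀ w + phi U S w₀ u₀ := by
    rw [hLdef, walkSum_append, hws₁, hsum₁, zero_add]
    show phi U S v₀ (v₀ + (w - v₀)) + walkSum (phi U S) (v₀ + (w - v₀)) (L₂ ++ [u₀ - w₀]) = _
    rw [show v₀ + (w - v₀) = w from by ring, walkSum_append, hws₂, hsum₂, zero_add]
    show _ + (phi U S w₀ (w₀ + (u₀ - w₀)) + walkSum (phi U S) (w₀ + (u₀ - w₀)) []) = _
    rw [show w₀ + (u₀ - w₀) = u₀ from by ring]
    show phi U S v₀ w + (phi U S w₀ u₀ + 0) = _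
    rw [add_zero]
  have h1 : phi U S v₀ w + phi U S w₀ u₀ = 0 := by rw [← hexp]; exact hclosed
  have h2 : phi U S w₀ u₀ = 1 := by
    rw [phi_symm]; exact phi_eq_one hu₀U hw₀ hS0
  have h3 : phi U S v₀ w = 1 := by
    rw [h2] at h1
    have h4 : phi U S v₀ w = -1 := eq_neg_of_add_eq_zero_left h1
    rw [h4]; decide
  obtain ⟨hvb, hr⟩ := phi_mem_S hw h3
  exact hr

end main

end P3Caux

theorem stmt14 (d : ℕ) (U : Set (Fin d → ℤ)) (hU : P3C.BiConnected d U) :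
    P3C.ConnectedIn (P3C.bdryGraph d U) (P3C.inBdry d U) := by
  have hconn : ((P3C.bdryGraph d U).induce (P3C.inBdry d U)).Connected := by
    rw [SimpleGraph.connected_iff]
    obtain ⟨a, b, ha, hb, hab⟩ := P3Caux.exists_bdry
      (Set.nonempty_iff_ne_empty.2 hU.1) (Set.nonempty_compl.2 hU.2.1)
    have haB : a ∈ P3C.inBdry d U := P3Caux.mem_inBdry.2 ⟨ha, b, hab, hb⟩
    refine ⟨?_, ⟨⟨a, haB⟩⟩⟩
    rintro ⟨x, hx⟩ ⟨y, hy⟩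
    exact P3Caux.key hU hx hy
  exact hconn
end

section
/- For every h ∈ hm(ℤ^d) and every edge e of ℤ^d, there is exactly one sublevel component A of h with e ∈ ∂A. -/
namespace Stmt16Aux

open P3C

lemma reach_ind {V : Type*} {G : SimpleGraph V} (P : V → Prop)
    (hP : ∀ x y, G.Adj x y → P x → P y) {a b : V} (h : G.Reachable a b) (ha : P a) : P b := by
  obtain ⟨w⟩ := h
  induction w with
  | nil => exact ha
  | cons hadj p ih => exact ih (hP _ _ hadj ha)

lemma mem_compIn_self {V : Type*} (G : SimpleGraph V) {S : Set V} {u : V} (hu : u ∈ S) :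
    u ∈ compIn G S u := ⟨hu, hu, .refl _⟩

lemma compIn_subset {V : Type*} (G : SimpleGraph V) (S : Set V) (u : V) : compIn G S u ⊆ S :=
  fun _ hw => hw.2.1

lemma compIn_congr {V : Type*} (G : SimpleGraph V) {S : Set V} {u w : V}
    (hw : w ∈ compIn G S u) : compIn G S w = compIn G S u := by
  obtain ⟨hu, hwS, hr⟩ := hw
  ext x
  constructor
  · rintro ⟨_, hx, hr2⟩; exact ⟨hu, hx, hr.trans hr2⟩
  · rintro ⟨_, hx, hr2⟩; exact ⟨hwS, hx, hr.symm.trans hr2⟩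

lemma adj_mem_compIn {V : Type*} (G : SimpleGraph V) {S : Set V} {u x y : V}
    (hx : x ∈ compIn G S u) (hy : y ∈ S) (hadj : G.Adj x y) : y ∈ compIn G S u := by
  obtain ⟨hu, hxS, hr⟩ := hx
  refine ⟨hu, hy, hr.trans ?_⟩
  exact SimpleGraph.Adj.reachable (by exact hadj : (G.induce S).Adj ⟨x, hxS⟩ ⟨y, hy⟩)

lemma subLL_le {d : ℕ} {h : (Fin d → ℤ) → ℤ} (hh : IsLatticeHHF d h) {k : ℤ}
    {u w : Fin d → ℤ} (hu : h u ≤ k) (hw : w ∈ subLL d h k u) : h w ≤ k := by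
  obtain ⟨hu', hw', hr⟩ := hw
  have := reach_ind (G := (latticeGraph d).induce {w | h w ≠ k + 1})
    (P := fun x => h (x : Fin d → ℤ) ≤ k) ?_ hr hu
  · exact this
  · rintro ⟨x, hx⟩ ⟨y, hy⟩ hadj hxle
    change h x ≤ k at hxle
    change h y ≤ k
    have : (latticeGraph d).Adj x y := hadj
    have h1 := hh x y this
    have h2 : h x - h y = 1 ∨ h x - h y = -1 := by
      rcases abs_eq (by norm_num : (0:ℤ) ≤ 1) |>.mp h1 with h' | h'
      · exact Or.inl h'
      · exact Or.inr h'
    simp only [Set.mem_setOf_eq] at hy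
    omega

lemma bdry_struct {d : ℕ} {h : (Fin d → ℤ) → ℤ} (hh : IsLatticeHHF d h) {k : ℤ}
    {u' v' : Fin d → ℤ} (hu' : h u' ≤ k) (hv' : k < h v')
    {x y : Fin d → ℤ} (hadj : (latticeGraph d).Adj x y)
    (hx : x ∈ subLC d h k u' v') (hy : y ∉ subLC d h k u' v') :
    h x = k ∧ h y = k + 1 ∧ subLC d h k u' v' = subLC d h k x y := by
  set S : Set (Fin d → ℤ) := {w | h w ≠ k + 1} with hS
  set LL : Set (Fin d → ℤ) := subLL d h k u' with hLL
  set C : Set (Fin d → ℤ) := compIn (latticeGraph d) LLᶜ v' with hC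
  have hxC : x ∉ C := hx
  have hyC : y ∈ C := not_not.mp hy
  -- x ∈ LL
  have hxLL : x ∈ LL := by
    by_contra hxn
    exact hxC (adj_mem_compIn _ hyC hxn hadj.symm)
  have hxle : h x ≤ k := subLL_le hh hu' hxLL
  -- h y = k + 1
  have hyLLc : y ∈ LLᶜ := compIn_subset _ _ _ hyC
  have hyk : h y = k + 1 := by
    by_contra hne
    exact hyLLc (adj_mem_compIn _ hxLL hne hadj)
  have habs := hh x y hadj
  have hxk : h x = k := by
    have : h x - h y = 1 ∨ h x - h y = -1 := by
      rcases abs_eq (by norm_num : (0:ℤ) ≤ 1) |>.mp habs with h' | h'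
      · exact Or.inl h'
      · exact Or.inr h'
    omega
  refine ⟨hxk, hyk, ?_⟩
  have hLLx : subLL d h k x = LL := compIn_congr _ hxLL
  have hCy : compIn (latticeGraph d) (subLL d h k x)ᶜ y = C := by
    rw [hLLx]
    exact compIn_congr _ hyC
  show Cᶜ = subLC d h k x y
  unfold subLC
  rw [hCy]

lemma main {d : ℕ} {h : (Fin d → ℤ) → ℤ} (hh : IsLatticeHHF d h) {u v : Fin d → ℤ}
    (hadj : (latticeGraph d).Adj u v) (hlt : h v = h u + 1) :
    ∃! A : Set (Fin d → ℤ), IsSublevelComponent d h A ∧ (u, v) ∈ edgeBdry d A := by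
  set k : ℤ := h u with hk
  set LL : Set (Fin d → ℤ) := subLL d h k u with hLL
  set C : Set (Fin d → ℤ) := compIn (latticeGraph d) LLᶜ v with hC
  have huLL : u ∈ LL := mem_compIn_self _ (by simp only [Set.mem_setOf_eq]; omega)
  have hvC : v ∈ C := by
    refine mem_compIn_self _ ?_
    intro hvLL
    have := subLL_le hh (le_refl k) hvLL
    omega
  have huA : u ∈ subLC d h k u v := by
    show u ∉ C
    intro huC
    have := compIn_subset (latticeGraph d) LLᶜ v huC
    exact this huLL
  have hvA : v ∉ subLC d h k u v := not_not.mpr hvC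
  refine ⟨subLC d h k u v, ⟨⟨u, v, k, le_refl _, by omega, rfl⟩, hadj, Or.inl ⟨huA, hvA⟩⟩, ?_⟩
  rintro B ⟨⟨u'', v'', k', hle, hltk, rfl⟩, _, hor⟩
  rcases hor with ⟨hu1, hv1⟩ | ⟨hv1, hu1⟩
  · obtain ⟨hxk, _, heq⟩ := bdry_struct hh hle hltk hadj hu1 hv1
    rw [heq]
    have : k' = k := by omega
    rw [this]
  · obtain ⟨hxk, hyk2, _⟩ := bdry_struct hh hle hltk hadj.symm hv1 hu1
    have habs := hh u v hadj
    have h2 : h u - h v = 1 ∨ h u - h v = -1 := by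
      rcases abs_eq (by norm_num : (0:ℤ) ≤ 1) |>.mp habs with h' | h'
      · exact Or.inl h'
      · exact Or.inr h'
    omega

lemma edgeBdry_symm {d : ℕ} {A : Set (Fin d → ℤ)} {u v : Fin d → ℤ} :
    (u, v) ∈ edgeBdry d A ↔ (v, u) ∈ edgeBdry d A := by
  unfold edgeBdry
  constructor
  · rintro ⟨h1, h2⟩; exact ⟨h1.symm, h2.symm⟩
  · rintro ⟨h1, h2⟩; exact ⟨h1.symm, h2.symm⟩

end Stmt16Aux

theorem stmt16 (d : ℕ) (h : (Fin d → ℤ) → ℤ) (hh : h ∈ P3C.homZeroLattice d)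
    (u v : Fin d → ℤ) (huv : (P3C.latticeGraph d).Adj u v) :
    ∃! A : Set (Fin d → ℤ), P3C.IsSublevelComponent d h A ∧ (u, v) ∈ P3C.edgeBdry d A := by
  have habs := hh.1 u v huv
  have h2 : h v = h u + 1 ∨ h u = h v + 1 := by
    rcases abs_eq (by norm_num : (0:ℤ) ≤ 1) |>.mp habs with h' | h'
    · exact Or.inr (by omega)
    · exact Or.inl (by omega)
  rcases h2 with h2 | h2
  · exact Stmt16Aux.main hh.1 huv h2
  · obtain ⟨A, hA, hA2⟩ := Stmt16Aux.main hh.1 huv.symm h2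
    refine ⟨A, ⟨hA.1, Stmt16Aux.edgeBdry_symm.mpr hA.2⟩, ?_⟩
    rintro B ⟨hB1, hB2⟩
    exact hA2 B ⟨hB1, Stmt16Aux.edgeBdry_symm.mp hB2⟩
end

section
/- Let n ≥ 2 be an even integer, h ∈ QP_m for some m ∈ ℤ^d, u ∈ ℤ^d, and z ∈ ℤ^d with z ≠ 0. Suppose A ∈ L_{(u, u+n·z)} is a sublevel component of h. Then: (a) if any two distinct members of T_A are disjoint, then A + n·z ∈ L_{(u+n·z, u)}; (b) if the complements of any two distinct members of T_A are disjoint, then A − n·z ∈ L_{(u+n·z, u)}. -/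
section Aux

open P3C

lemma adj_translate_of {d : ℕ} (t : Fin d → ℤ) {v w : Fin d → ℤ}
    (h : (latticeGraph d).Adj v w) : (latticeGraph d).Adj (v + t) (w + t) := by
  obtain ⟨i, h1, h2⟩ := h
  exact ⟨i, by simp only [Pi.add_apply]; omega, fun j hj => by simp [h2 j hj]⟩

lemma reach_translate {d : ℕ} (t : Fin d → ℤ) (S : Set (Fin d → ℤ)) {u w : Fin d → ℤ}
    (hu : u ∈ S) (hw : w ∈ S)
    (h : ((latticeGraph d).induce S).Reachable ⟨u, hu⟩ ⟨w, hw⟩) :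
    ((latticeGraph d).induce ((fun x => x + t) '' S)).Reachable
      ⟨u + t, ⟨u, hu, rfl⟩⟩ ⟨w + t, ⟨w, hw, rfl⟩⟩ := by
  let φ : (latticeGraph d).induce S →g (latticeGraph d).induce ((fun x => x + t) '' S) :=
    { toFun := fun x => ⟨x.1 + t, ⟨x.1, x.2, rfl⟩⟩,
      map_rel' := fun hxy => adj_translate_of t hxy }
  exact h.map φ

lemma compIn_translate_subset {d : ℕ} (t : Fin d → ℤ) (S : Set (Fin d → ℤ)) (u : Fin d → ℤ) :
    (fun x => x + t) '' compIn (latticeGraph d) S u ⊆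
      compIn (latticeGraph d) ((fun x => x + t) '' S) (u + t) := by
  rintro _ ⟨w, ⟨hu, hw, hr⟩, rfl⟩
  exact ⟨⟨u, hu, rfl⟩, ⟨w, hw, rfl⟩, reach_translate t S hu hw hr⟩

lemma compIn_translate {d : ℕ} (t : Fin d → ℤ) (S : Set (Fin d → ℤ)) (u : Fin d → ℤ) :
    compIn (latticeGraph d) ((fun x => x + t) '' S) (u + t)
      = (fun x => x + t) '' compIn (latticeGraph d) S u := by
  apply Set.Subset.antisymm
  · have h := compIn_translate_subset (-t) ((fun x => x + t) '' S) (u + t)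
    have e1 : (fun x => x + (-t)) '' ((fun x => x + t) '' S) = S := by
      rw [Set.image_image]; simp
    have e2 : u + t + (-t) = u := by simp
    rw [e1, e2] at h
    intro w hw
    have hmem : w + (-t) ∈ compIn (latticeGraph d) S u := h ⟨w, hw, rfl⟩
    exact ⟨w + (-t), hmem, by simp⟩
  · exact compIn_translate_subset t S u

lemma image_compl_translate {d : ℕ} (t : Fin d → ℤ) (X : Set (Fin d → ℤ)) :
    (fun x => x + t) '' Xᶜ = ((fun x => x + t) '' X)ᶜ := by
  have he : (fun x : Fin d → ℤ => x + t) = ⇑(Equiv.addRight t) := rfl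
  rw [he, Set.image_compl_eq (Equiv.addRight t).bijective]

lemma qp_single_mul (n d : ℕ) (m : Fin d → ℤ) (h : (Fin d → ℤ) → ℤ) (hh : IsQP n d m h)
    (v : Fin d → ℤ) (i : Fin d) (a : ℤ) :
    h (v + a • Pi.single i (n : ℤ)) = h v + a * m i := by
  induction a using Int.induction_on with
  | zero => simp
  | succ k ih =>
      have e : v + ((k : ℤ) + 1) • Pi.single i (n : ℤ)
           = (v + (k : ℤ) • Pi.single i (n : ℤ)) + Pi.single i (n : ℤ) := by
        rw [add_smul, one_smul]; abel
      rw [e, hh.2, ih]; ring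
  | pred k ih =>
      have e : v + (-(k : ℤ) - 1) • Pi.single i (n : ℤ) + Pi.single i (n : ℤ)
           = v + (-(k : ℤ)) • Pi.single i (n : ℤ) := by
        rw [sub_smul, one_smul]; abel
      have h2 := hh.2 (v + (-(k : ℤ) - 1) • Pi.single i (n : ℤ)) i
      rw [e, ih] at h2
      linarith

lemma qp_finset (n d : ℕ) (m : Fin d → ℤ) (h : (Fin d → ℤ) → ℤ) (hh : IsQP n d m h)
    (w : Fin d → ℤ) (v : Fin d → ℤ) (s : Finset (Fin d)) :
    h (v + ∑ i ∈ s, w i • Pi.single i (n : ℤ)) = h v + ∑ i ∈ s, w i * m i := by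
  induction s using Finset.induction_on with
  | empty => simp
  | insert a s' hns ih =>
      rw [Finset.sum_insert hns, Finset.sum_insert hns]
      have e : v + (w a • Pi.single a (n : ℤ) + ∑ i ∈ s', w i • Pi.single i (n : ℤ))
          = (v + ∑ i ∈ s', w i • Pi.single i (n : ℤ)) + w a • Pi.single a (n : ℤ) := by abel
      rw [e, qp_single_mul n d m h hh _ a (w a), ih]; ring

lemma qp_translate (n d : ℕ) (m : Fin d → ℤ) (h : (Fin d → ℤ) → ℤ) (hh : IsQP n d m h)
    (w : Fin d → ℤ) (v : Fin d → ℤ) :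
    h (v + fun i => (n : ℤ) * w i) = h v + ∑ i, w i * m i := by
  have e : (fun i => (n : ℤ) * w i) = ∑ i, w i • Pi.single i (n : ℤ) := by
    funext j
    rw [Finset.sum_apply]
    simp [Pi.single_apply, mul_comm]
  rw [e, qp_finset n d m h hh w v Finset.univ]

lemma level_set_translate (n d : ℕ) (m : Fin d → ℤ) (h : (Fin d → ℤ) → ℤ) (hh : IsQP n d m h)
    (w : Fin d → ℤ) (k : ℤ) :
    (fun x => x + fun i => (n : ℤ) * w i) '' {x | h x ≠ k + 1}
      = {x | h x ≠ (k + ∑ i, w i * m i) + 1} := by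
  ext x
  constructor
  · rintro ⟨y, hy, rfl⟩
    have := qp_translate n d m h hh w y
    simp only [Set.mem_setOf_eq] at hy ⊢
    omega
  · intro hx
    refine ⟨x + fun i => -((n : ℤ) * w i), ?_, ?_⟩
    · have e : (x + fun i => -((n : ℤ) * w i)) + (fun i => (n : ℤ) * w i) = x := by
        funext j; simp
      have := qp_translate n d m h hh w (x + fun i => -((n : ℤ) * w i))
      rw [e] at this
      simp only [Set.mem_setOf_eq] at hx ⊢
      omega
    · funext j; simp

lemma subLC_translate (n d : ℕ) (m : Fin d → ℤ) (h : (Fin d → ℤ) → ℤ) (hh : IsQP n d m h)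
    (w : Fin d → ℤ) (k : ℤ) (u' v' : Fin d → ℤ) :
    (fun x => x + fun i => (n : ℤ) * w i) '' subLC d h k u' v'
      = subLC d h (k + ∑ i, w i * m i) (u' + fun i => (n : ℤ) * w i)
          (v' + fun i => (n : ℤ) * w i) := by
  set t : Fin d → ℤ := fun i => (n : ℤ) * w i with ht
  have hLL : subLL d h (k + ∑ i, w i * m i) (u' + t) = (fun x => x + t) '' subLL d h k u' := by
    unfold subLL
    rw [← level_set_translate n d m h hh w k, compIn_translate]
  unfold subLC
  rw [hLL, ← image_compl_translate, compIn_translate, image_compl_translate]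

lemma sublevel_translate (n d : ℕ) (m : Fin d → ℤ) (h : (Fin d → ℤ) → ℤ) (hh : IsQP n d m h)
    (w : Fin d → ℤ) (A : Set (Fin d → ℤ)) (hA : IsSublevelComponent d h A) :
    IsSublevelComponent d h ((fun x => x + fun i => (n : ℤ) * w i) '' A) := by
  obtain ⟨u', v', k, h1, h2, rfl⟩ := hA
  refine ⟨u' + fun i => (n : ℤ) * w i, v' + fun i => (n : ℤ) * w i, k + ∑ i, w i * m i,
    ?_, ?_, subLC_translate n d m h hh w k u' v'⟩
  · rw [qp_translate n d m h hh w u']; omega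
  · rw [qp_translate n d m h hh w v']; omega

end Aux

theorem stmt19 (n d : ℕ) (hn : Even n) (hn2 : 2 ≤ n)
    (m : Fin d → ℤ) (h : (Fin d → ℤ) → ℤ) (hh : P3C.IsQP n d m h)
    (u z : Fin d → ℤ) (hz : z ≠ 0)
    (A : Set (Fin d → ℤ)) (hA : A ∈ P3C.sepComps d h u (u + (n : ℤ) • z)) :
    ((∀ A1 ∈ P3C.translates n d A, ∀ A2 ∈ P3C.translates n d A, A1 ≠ A2 → A1 ∩ A2 = ∅) →
      ((fun x => x + (n : ℤ) • z) '' A) ∈ P3C.sepComps d h (u + (n : ℤ) • z) u) ∧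
    ((∀ A1 ∈ P3C.translates n d A, ∀ A2 ∈ P3C.translates n d A, A1 ≠ A2 → A1ᶜ ∩ A2ᶜ = ∅) →
      ((fun x => x + (-(n : ℤ)) • z) '' A) ∈ P3C.sepComps d h (u + (n : ℤ) • z) u) := by
  obtain ⟨hAsub, huA, hvA⟩ := hA
  have htz : ((n : ℤ) • z) = fun i => (n : ℤ) * z i := by
    funext i; simp
  have hsz : ((-(n : ℤ)) • z) = fun i => (n : ℤ) * (-z) i := by
    funext i; simp only [Pi.smul_apply, Pi.neg_apply, smul_eq_mul]; ring
  -- A is a translate of itself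
  have memA : A ∈ P3C.translates n d A := by
    refine ⟨0, fun i => by simp, ?_⟩
    simp
  -- A + n•z is a translate of A
  have memAt : (fun x => x + (n : ℤ) • z) '' A ∈ P3C.translates n d A :=
    ⟨(n : ℤ) • z, fun i => by rw [htz]; exact dvd_mul_right _ _, rfl⟩
  -- A ≠ A + n•z
  have hne : A ≠ (fun x => x + (n : ℤ) • z) '' A := by
    intro heq
    exact hvA (heq ▸ ⟨u, huA, rfl⟩)
  constructor
  · intro hdisj
    have hd := hdisj A memA _ memAt hne
    refine ⟨?_, ⟨u, huA, rfl⟩, ?_⟩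
    · rw [htz]
      exact sublevel_translate n d m h hh z A hAsub
    · intro hu
      have : u ∈ A ∩ (fun x => x + (n : ℤ) • z) '' A := ⟨huA, hu⟩
      rw [hd] at this
      exact this
  · intro hdisj
    have hd := hdisj A memA _ memAt hne
    have hu2 : u + (n : ℤ) • z + (n : ℤ) • z ∈ A := by
      by_contra hcon
      have h1 : u + (n : ℤ) • z + (n : ℤ) • z ∉ (fun x => x + (n : ℤ) • z) '' A := by
        rintro ⟨a, ha, hae⟩
        have : a = u + (n : ℤ) • z := by
          have := hae
          exact add_right_cancel this
        exact hvA (this ▸ ha)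
      have : u + (n : ℤ) • z + (n : ℤ) • z ∈ Aᶜ ∩ ((fun x => x + (n : ℤ) • z) '' A)ᶜ :=
        ⟨hcon, h1⟩
      rw [hd] at this
      exact this
    refine ⟨?_, ?_, ?_⟩
    · rw [hsz]
      exact sublevel_translate n d m h hh (-z) A hAsub
    · refine ⟨u + (n : ℤ) • z + (n : ℤ) • z, hu2, ?_⟩
      have : (-(n : ℤ)) • z = -((n : ℤ) • z) := by simp
      rw [this]
      abel
    · rintro ⟨a, ha, hae⟩
      have : a = u + (n : ℤ) • z := by
        have h1 : a + (-(n : ℤ)) • z = u := hae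
        have h2 : (-(n : ℤ)) • z = -((n : ℤ) • z) := by simp
        rw [h2] at h1
        have := congrArg (fun x => x + (n : ℤ) • z) h1
        simpa using this
      exact hvA (this ▸ ha)
end
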